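/- arXiv:2307.01314 — 2 statements merged into one kernel-verified Lean document; each statement's English description precedes it below -/
import Mathlib

section
/- There is no 2-2-2-2-2 configuration under the Modified CFLS coloring φ in which exactly four color classes are matchings and the remaining color class is a path. -/
namespace CFLS

/-- A vertex of `K_n` for `n = 2^(m^2)`: `m` blocks, each a string of `m` bits.
`x k` is the `k`-th block `x^(k+1)`, and `x k j` is its `j`-th bit (most significant first). -/
abbrev Vtx (m : ℕ) := Fin m → Fin m → Bool

/-- The `j`-th bit of a bit string (as a total function of `j : ℕ`). -/
def bitAt {N : ℕ} (f : Fin N → Bool) (j : ℕ) : Bool :=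
  if h : j < N then f ⟨j, h⟩ else false

/-- The value of a bit string read as a binary integer, most significant bit first. -/
def strToNat {N : ℕ} (f : Fin N → Bool) : ℕ :=
  ∑ j : Fin N, if f j then 2 ^ (N - 1 - j.val) else 0

/-- The `k`-th block of a vertex (as a total function of `k : ℕ`). -/
def blockAt {m : ℕ} (x : Vtx m) (k : ℕ) : Fin m → Bool :=
  if h : k < m then x ⟨k, h⟩ else fun _ => false

/-- The least block index at which `x` and `y` differ. -/
noncomputable def firstDiffBlock {m : ℕ} (x y : Vtx m) : ℕ :=
  sInf {k | blockAt x k ≠ blockAt y k}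

/-- The position (1-indexed) of the first bit at which two bit strings differ; `0` if equal. -/
noncomputable def firstDiffIdx {N : ℕ} (f g : Fin N → Bool) : ℕ :=
  if f = g then 0 else sInf {j | bitAt f j ≠ bitAt g j} + 1

/-- The value of a vertex read as a binary integer (concatenation of its blocks). -/
def vtxToNat {m : ℕ} (x : Vtx m) : ℕ :=
  ∑ k : Fin m, strToNat (x k) * (2 ^ m) ^ (m - 1 - k.val)

/-- The colors of the Modified CFLS coloring:
`((i, {x^(i), y^(i)}), i_1, …, i_m, δ_1, …, δ_m)`. -/
abbrev Color (m : ℕ) := (ℕ × Set (Fin m → Bool)) × (Fin m → ℕ) × (Fin m → ℤ)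

/-- The Modified CFLS color of the edge `xy` assuming `x ≤ y` as binary integers. -/
noncomputable def phiAux {m : ℕ} (x y : Vtx m) : Color m :=
  ((firstDiffBlock x y,
      {blockAt x (firstDiffBlock x y), blockAt y (firstDiffBlock x y)}),
   fun k => firstDiffIdx (x k) (y k),
   fun k => if strToNat (x k) ≤ strToNat (y k) then (1 : ℤ) else -1)

/-- The Modified CFLS coloring `φ`. -/
noncomputable def phi {m : ℕ} (x y : Vtx m) : Color m :=
  if vtxToNat x ≤ vtxToNat y then phiAux x y else phiAux y x

/-- The ten edges among five vertices. -/
def edgeList {m : ℕ} (a b c d e : Vtx m) : List (Vtx m × Vtx m) :=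
  [(a,b),(a,c),(a,d),(a,e),(b,c),(b,d),(b,e),(c,d),(c,e),(d,e)]

/-- The number of the ten edges among `a,b,c,d,e` receiving color `col` under `φ`. -/
noncomputable def colorCount {m : ℕ} (a b c d e : Vtx m) (col : Color m) : ℕ :=
  ((edgeList a b c d e).map fun p => phi p.1 p.2).countP fun x =>
    @decide (x = col) (Classical.propDecidable _)

/-- Five pairwise distinct vertices. -/
def Distinct5 {m : ℕ} (a b c d e : Vtx m) : Prop :=
  a ≠ b ∧ a ≠ c ∧ a ≠ d ∧ a ≠ e ∧ b ≠ c ∧ b ≠ d ∧ b ≠ e ∧ c ≠ d ∧ c ≠ e ∧ d ≠ e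

/-- `col` appears on some edge among `a,b,c,d,e`. -/
noncomputable def IsAttained {m : ℕ} (a b c d e : Vtx m) (col : Color m) : Prop :=
  colorCount a b c d e col ≠ 0

/-- A 2-2-2-2-2 configuration: five distinct vertices such that `φ` on the ten edges
among them takes exactly five values, each attained on exactly two edges. -/
def IsConfig22222 {m : ℕ} (a b c d e : Vtx m) : Prop :=
  Distinct5 a b c d e ∧
  ∀ col : Color m, colorCount a b c d e col = 0 ∨ colorCount a b c d e col = 2

/-- The color class of `col` is a matching: two vertex-disjoint edges of color `col`. -/
def IsMatchingClass {m : ℕ} (a b c d e : Vtx m) (col : Color m) : Prop :=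
  ∃ p ∈ edgeList a b c d e, ∃ q ∈ edgeList a b c d e,
    phi p.1 p.2 = col ∧ phi q.1 q.2 = col ∧
    p.1 ≠ q.1 ∧ p.1 ≠ q.2 ∧ p.2 ≠ q.1 ∧ p.2 ≠ q.2

/-- The color class of `col` is a path: two distinct edges of color `col` sharing a vertex. -/
def IsPathClass {m : ℕ} (a b c d e : Vtx m) (col : Color m) : Prop :=
  ∃ p ∈ edgeList a b c d e, ∃ q ∈ edgeList a b c d e,
    p ≠ q ∧ phi p.1 p.2 = col ∧ phi q.1 q.2 = col ∧
    (p.1 = q.1 ∨ p.1 = q.2 ∨ p.2 = q.1 ∨ p.2 = q.2)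


section Arith

lemma succ_sum_eq (B N : ℕ) (d : Fin (N+1) → ℕ) :
    (∑ k : Fin N, d k.succ * B ^ (N + 1 - 1 - ((k.succ : Fin (N+1)) : ℕ)))
      = ∑ k : Fin N, d k.succ * B ^ (N - 1 - k.val) :=
  Finset.sum_congr rfl (fun k _ => by
    have h : (N + 1 - 1 - ((k.succ : Fin (N+1)) : ℕ)) = N - 1 - k.val := by
      rw [Fin.val_succ]; omega
    rw [h])

lemma digit_sum_lt (B : ℕ) (hB : 1 ≤ B) : ∀ (N : ℕ) (d : Fin N → ℕ), (∀ k, d k < B) →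
    (∑ k : Fin N, d k * B ^ (N - 1 - k.val)) < B ^ N := by
  intro N
  induction N with
  | zero => intro d hd; simp
  | succ N ih =>
    intro d hd
    rw [Fin.sum_univ_succ, succ_sum_eq]
    have htail : (∑ k : Fin N, d k.succ * B ^ (N - 1 - k.val)) < B ^ N :=
      ih (fun k => d k.succ) (fun k => hd k.succ)
    have hhead : d 0 * B ^ (N + 1 - 1 - (0 : Fin (N+1)).val) ≤ (B - 1) * B ^ N := by
      have h0 : (N + 1 - 1 - (0 : Fin (N+1)).val) = N := by simp
      rw [h0]
      exact Nat.mul_le_mul_right _ (by have := hd 0; omega)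
    have hsplit : (B - 1) * B ^ N + B ^ N = B ^ (N + 1) := by
      have h1 : (B - 1) * B ^ N + B ^ N = ((B - 1) + 1) * B ^ N := by ring
      have h2 : (B - 1) + 1 = B := by omega
      rw [h1, h2, pow_succ, mul_comm]
    omega

lemma digit_sum_inj (B : ℕ) (hB : 1 ≤ B) : ∀ (N : ℕ) (d e : Fin N → ℕ), (∀ k, d k < B) →
    (∀ k, e k < B) →
    (∑ k : Fin N, d k * B ^ (N - 1 - k.val)) = (∑ k : Fin N, e k * B ^ (N - 1 - k.val)) →
    d = e := by
  intro N
  induction N with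
  | zero => intro d e _ _ _; funext k; exact absurd k.isLt (by omega)
  | succ N ih =>
    intro d e hd he hsum
    rw [Fin.sum_univ_succ, Fin.sum_univ_succ, succ_sum_eq, succ_sum_eq] at hsum
    have h0 : (N + 1 - 1 - (0 : Fin (N+1)).val) = N := by simp
    rw [h0] at hsum
    have htd : (∑ k : Fin N, d k.succ * B ^ (N - 1 - k.val)) < B ^ N :=
      digit_sum_lt B hB N _ (fun k => hd k.succ)
    have hte : (∑ k : Fin N, e k.succ * B ^ (N - 1 - k.val)) < B ^ N :=
      digit_sum_lt B hB N _ (fun k => he k.succ)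
    have hhead : d 0 = e 0 := by
      by_contra hne
      rcases Nat.lt_or_ge (d 0) (e 0) with h | h
      · have h1 : (d 0 + 1) * B ^ N ≤ e 0 * B ^ N := Nat.mul_le_mul_right _ (by omega)
        rw [add_mul, one_mul] at h1
        omega
      · have h' : e 0 < d 0 := by omega
        have h1 : (e 0 + 1) * B ^ N ≤ d 0 * B ^ N := Nat.mul_le_mul_right _ (by omega)
        rw [add_mul, one_mul] at h1
        omega
    rw [hhead] at hsum
    have htails := ih (fun k => d k.succ) (fun k => e k.succ) (fun k => hd _) (fun k => he _)
      (show (∑ k : Fin N, d k.succ * B ^ (N - 1 - k.val))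
          = (∑ k : Fin N, e k.succ * B ^ (N - 1 - k.val)) by omega)
    funext k
    refine Fin.cases ?_ ?_ k
    · exact hhead
    · intro j; exact congrFun htails j

/-- `strToNat` as a digit sum. -/
lemma strToNat_eq_digit_sum {N : ℕ} (f : Fin N → Bool) :
    strToNat f = ∑ j : Fin N, (if f j then 1 else 0) * 2 ^ (N - 1 - j.val) := by
  unfold strToNat
  apply Finset.sum_congr rfl
  intro j _
  by_cases h : f j <;> simp [h]

lemma strToNat_inj {N : ℕ} (f g : Fin N → Bool) (h : strToNat f = strToNat g) : f = g := by
  rw [strToNat_eq_digit_sum, strToNat_eq_digit_sum] at h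
  have := digit_sum_inj 2 (by norm_num) N (fun j => if f j then 1 else 0)
    (fun j => if g j then 1 else 0)
    (fun j => by by_cases hf : f j <;> simp [hf])
    (fun j => by by_cases hg : g j <;> simp [hg]) h
  funext j
  have := congrFun this j
  by_cases hf : f j <;> by_cases hg : g j <;> simp [hf, hg] at this ⊢

lemma strToNat_lt {N : ℕ} (f : Fin N → Bool) : strToNat f < 2 ^ N := by
  rw [strToNat_eq_digit_sum]
  exact digit_sum_lt 2 (by norm_num) N _ (fun j => by by_cases hf : f j <;> simp [hf])

lemma vtxToNat_inj {m : ℕ} (x y : Vtx m) (h : vtxToNat x = vtxToNat y) : x = y := by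
  unfold vtxToNat at h
  have := digit_sum_inj (2 ^ m) (Nat.one_le_two_pow) m (fun k => strToNat (x k))
    (fun k => strToNat (y k)) (fun k => strToNat_lt _) (fun k => strToNat_lt _) h
  funext k
  exact strToNat_inj _ _ (congrFun this k)

end Arith
section Blocks
variable {m : ℕ}

lemma phi_comm (x y : Vtx m) (hxy : x ≠ y) : phi x y = phi y x := by
  unfold phi
  rcases Nat.lt_or_ge (vtxToNat x) (vtxToNat y) with h | h
  · rw [if_pos (le_of_lt h), if_neg (by omega)]
  · rcases Nat.lt_or_ge (vtxToNat y) (vtxToNat x) with h2 | h2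
    · rw [if_neg (by omega), if_pos (le_of_lt h2)]
    · exact absurd (vtxToNat_inj x y (by omega)) hxy

lemma blockAt_eval (x : Vtx m) (k : ℕ) (h : k < m) : blockAt x k = x ⟨k, h⟩ := dif_pos h

lemma fdb_comm (x y : Vtx m) : firstDiffBlock x y = firstDiffBlock y x := by
  unfold firstDiffBlock
  congr 1
  ext k
  exact ne_comm

lemma fdb_mem (x y : Vtx m) (h : x ≠ y) :
    blockAt x (firstDiffBlock x y) ≠ blockAt y (firstDiffBlock x y) := by
  have hne : {k | blockAt x k ≠ blockAt y k}.Nonempty := by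
    have : ∃ k : Fin m, x k ≠ y k := by
      by_contra hc
      push_neg at hc
      exact h (funext hc)
    obtain ⟨k, hk⟩ := this
    refine ⟨k.val, ?_⟩
    simp only [Set.mem_setOf_eq, blockAt_eval x k.val k.isLt, blockAt_eval y k.val k.isLt]
    simpa using hk
  exact Nat.sInf_mem hne

lemma fdb_lt (x y : Vtx m) {j : ℕ} (hj : j < firstDiffBlock x y) :
    blockAt x j = blockAt y j := by
  have := Nat.notMem_of_lt_sInf (s := {k | blockAt x k ≠ blockAt y k}) hj
  simpa using this

lemma fdb_le (x y : Vtx m) {k : ℕ} (h : blockAt x k ≠ blockAt y k) :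
    firstDiffBlock x y ≤ k := Nat.sInf_le h

lemma fdb_lt_m (x y : Vtx m) (h : x ≠ y) : firstDiffBlock x y < m := by
  by_contra hc
  push_neg at hc
  apply fdb_mem x y h
  unfold blockAt
  rw [dif_neg (by omega), dif_neg (by omega)]

lemma fdi_comm {N : ℕ} (f g : Fin N → Bool) : firstDiffIdx f g = firstDiffIdx g f := by
  unfold firstDiffIdx
  by_cases h : f = g
  · rw [if_pos h, if_pos h.symm]
  · rw [if_neg h, if_neg (Ne.symm h)]
    have : {j | bitAt f j ≠ bitAt g j} = {j | bitAt g j ≠ bitAt f j} := by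
      ext j; exact ne_comm
    rw [this]

lemma fdi_eq_zero_iff {N : ℕ} (f g : Fin N → Bool) : firstDiffIdx f g = 0 ↔ f = g := by
  unfold firstDiffIdx
  by_cases h : f = g <;> simp [h]

/-- same (unordered) edge -/
def sE {m : ℕ} (x y z w : Vtx m) : Prop := (x = z ∧ y = w) ∨ (x = w ∧ y = z)

lemma phiAux_parts (x y z w : Vtx m) (h : phiAux x y = phiAux z w) :
    firstDiffBlock x y = firstDiffBlock z w ∧
    ({blockAt x (firstDiffBlock x y), blockAt y (firstDiffBlock x y)} : Set (Fin m → Bool)) =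
      {blockAt z (firstDiffBlock z w), blockAt w (firstDiffBlock z w)} ∧
    (∀ k : Fin m, firstDiffIdx (x k) (y k) = firstDiffIdx (z k) (w k)) ∧
    (∀ k : Fin m, strToNat (x k) ≤ strToNat (y k) ↔ strToNat (z k) ≤ strToNat (w k)) := by
  have h1 := congrArg (fun c => c.1.1) h
  have h2 := congrArg (fun c => c.1.2) h
  have h3 := congrArg (fun c => c.2.1) h
  have h4 := congrArg (fun c => c.2.2) h
  simp only [phiAux] at h1 h2 h3 h4
  refine ⟨h1, h2, fun k => congrFun h3 k, fun k => ?_⟩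
  have := congrFun h4 k
  by_cases ha : strToNat (x k) ≤ strToNat (y k) <;>
    by_cases hb : strToNat (z k) ≤ strToNat (w k) <;>
    simp [ha, hb] at this ⊢

lemma phi_cases (x y z w : Vtx m) (h : phi x y = phi z w) :
    (phiAux x y = phiAux z w) ∨ (phiAux x y = phiAux w z) ∨
    (phiAux y x = phiAux z w) ∨ (phiAux y x = phiAux w z) := by
  unfold phi at h
  by_cases h1 : vtxToNat x ≤ vtxToNat y <;> by_cases h2 : vtxToNat z ≤ vtxToNat w <;>
    simp only [h1, h2, if_true, if_false, if_pos, if_neg, not_false_iff] at h <;> tauto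

lemma phi_eq_fdb (x y z w : Vtx m) (h : phi x y = phi z w) :
    firstDiffBlock x y = firstDiffBlock z w := by
  rcases phi_cases x y z w h with h' | h' | h' | h' <;>
    have := (phiAux_parts _ _ _ _ h').1 <;>
    simpa only [fdb_comm y x, fdb_comm w z] using this

lemma phi_eq_set (x y z w : Vtx m) (h : phi x y = phi z w) :
    ({blockAt x (firstDiffBlock x y), blockAt y (firstDiffBlock x y)} : Set (Fin m → Bool)) =
      {blockAt z (firstDiffBlock z w), blockAt w (firstDiffBlock z w)} := by
  rcases phi_cases x y z w h with h' | h' | h' | h' <;>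
    have := (phiAux_parts _ _ _ _ h').2.1 <;>
    first
      | exact this
      | simpa [fdb_comm x y, fdb_comm z w, Set.pair_comm] using this

lemma phi_eq_fdi (x y z w : Vtx m) (h : phi x y = phi z w) (k : Fin m) :
    firstDiffIdx (x k) (y k) = firstDiffIdx (z k) (w k) := by
  rcases phi_cases x y z w h with h' | h' | h' | h' <;>
    have := (phiAux_parts _ _ _ _ h').2.2.1 k <;>
    first
      | exact this
      | simpa [fdi_comm (x k), fdi_comm (z k)] using this

lemma phi_eq_delta (x y z w : Vtx m) (h : phi x y = phi z w) :
    (∀ k : Fin m, strToNat (x k) ≤ strToNat (y k) ↔ strToNat (z k) ≤ strToNat (w k)) ∨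
    (∀ k : Fin m, strToNat (x k) ≤ strToNat (y k) ↔ strToNat (w k) ≤ strToNat (z k)) ∨
    (∀ k : Fin m, strToNat (y k) ≤ strToNat (x k) ↔ strToNat (z k) ≤ strToNat (w k)) ∨
    (∀ k : Fin m, strToNat (y k) ≤ strToNat (x k) ↔ strToNat (w k) ≤ strToNat (z k)) := by
  rcases phi_cases x y z w h with h' | h' | h' | h'
  · exact Or.inl (phiAux_parts _ _ _ _ h').2.2.2
  · exact Or.inr (Or.inl (phiAux_parts _ _ _ _ h').2.2.2)
  · exact Or.inr (Or.inr (Or.inl (phiAux_parts _ _ _ _ h').2.2.2))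
  · exact Or.inr (Or.inr (Or.inr (phiAux_parts _ _ _ _ h').2.2.2))

end Blocks
section Analytic
variable {m : ℕ}

lemma fdb_min_le (x y z : Vtx m) (hxz : x ≠ z) :
    min (firstDiffBlock x y) (firstDiffBlock y z) ≤ firstDiffBlock x z := by
  by_contra hc
  push_neg at hc
  have h1 : blockAt x (firstDiffBlock x z) = blockAt y (firstDiffBlock x z) :=
    fdb_lt x y (lt_of_lt_of_le hc (min_le_left _ _))
  have h2 : blockAt y (firstDiffBlock x z) = blockAt z (firstDiffBlock x z) :=
    fdb_lt y z (lt_of_lt_of_le hc (min_le_right _ _))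
  exact fdb_mem x z hxz (h1.trans h2)

lemma AL (a b c d e : Vtx m)
    (hab : a ≠ b) (hac : a ≠ c) (had : a ≠ d) (hae : a ≠ e) (hbc : b ≠ c) (hbd : b ≠ d)
    (hbe : b ≠ e) (hcd : c ≠ d) (hce : c ≠ e) (hde : d ≠ e)
    (h1 : phi c a = phi c b) (h2 : phi a b = phi d e)
    (h3 : phi c d = phi a e) (h4 : phi c e = phi b d) : False := by
  set p := firstDiffBlock c a with hp
  have hpcb : firstDiffBlock c b = p := (phi_eq_fdb _ _ _ _ h1).symm
  have hpm : p < m := fdb_lt_m c a (Ne.symm hac)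
  have hca_p : blockAt c p ≠ blockAt a p := fdb_mem c a (Ne.symm hac)
  have hcb_p : blockAt c p ≠ blockAt b p := by
    have := fdb_mem c b (Ne.symm hbc); rwa [hpcb] at this
  -- a and b share block p
  have hab_p : blockAt a p = blockAt b p := by
    have hset := phi_eq_set c a c b h1
    rw [hpcb] at hset
    have hmem : blockAt a p ∈ ({blockAt c p, blockAt b p} : Set (Fin m → Bool)) := by
      rw [← hset]; exact Set.mem_insert_iff.mpr (Or.inr rfl)
    rcases Set.mem_insert_iff.mp hmem with h | h
    · exact absurd h.symm hca_p
    · exact h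
  set q := firstDiffBlock a b with hqdef
  have hqde : firstDiffBlock d e = q := (phi_eq_fdb _ _ _ _ h2).symm
  have hqm : q < m := fdb_lt_m a b hab
  have hab_q : blockAt a q ≠ blockAt b q := fdb_mem a b hab
  have hde_q : blockAt d q ≠ blockAt e q := by
    have := fdb_mem d e hde; rwa [hqde] at this
  have hpq : p < q := by
    rcases Nat.lt_trichotomy q p with h | h | h
    · exact absurd ((fdb_lt c a h).symm.trans (fdb_lt c b (hpcb ▸ h))) hab_q
    · exact absurd (h ▸ hab_p) hab_q
    · exact h
  have hdep : blockAt d p = blockAt e p := fdb_lt d e (hqde ▸ hpq)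
  set r := firstDiffBlock c d with hrdef
  have hrae : firstDiffBlock a e = r := (phi_eq_fdb _ _ _ _ h3).symm
  have hcd_r : blockAt c r ≠ blockAt d r := fdb_mem c d hcd
  have hae_r : blockAt a r ≠ blockAt e r := by
    have := fdb_mem a e hae; rwa [hrae] at this
  rcases Nat.lt_trichotomy r p with hrp | hrp | hrp
  · -- Case r < p
    have hrm : r < m := lt_trans hrp hpm
    have har : blockAt a r = blockAt c r := (fdb_lt c a hrp).symm
    have hbr : blockAt b r = blockAt c r := (fdb_lt c b (hpcb ▸ hrp)).symm
    have her : blockAt e r = blockAt d r := (fdb_lt d e (hqde ▸ lt_trans hrp hpq)).symm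
    -- Fin-level indices
    have har' : a ⟨r, hrm⟩ = c ⟨r, hrm⟩ := by
      rw [← blockAt_eval a r hrm, ← blockAt_eval c r hrm]; exact har
    have hbr' : b ⟨r, hrm⟩ = c ⟨r, hrm⟩ := by
      rw [← blockAt_eval b r hrm, ← blockAt_eval c r hrm]; exact hbr
    have her' : e ⟨r, hrm⟩ = d ⟨r, hrm⟩ := by
      rw [← blockAt_eval e r hrm, ← blockAt_eval d r hrm]; exact her
    have hUW : strToNat (c ⟨r, hrm⟩) ≠ strToNat (d ⟨r, hrm⟩) := fun hh =>
      hcd_r (by rw [blockAt_eval c r hrm, blockAt_eval d r hrm]; exact strToNat_inj _ _ hh)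
    have hA : blockAt a q = a ⟨q, hqm⟩ := blockAt_eval a q hqm
    have hB : blockAt b q = b ⟨q, hqm⟩ := blockAt_eval b q hqm
    have hD : blockAt d q = d ⟨q, hqm⟩ := blockAt_eval d q hqm
    have hE : blockAt e q = e ⟨q, hqm⟩ := blockAt_eval e q hqm
    have hAB : a ⟨q, hqm⟩ ≠ b ⟨q, hqm⟩ := by rw [← hA, ← hB]; exact hab_q
    have hDE : d ⟨q, hqm⟩ ≠ e ⟨q, hqm⟩ := by rw [← hD, ← hE]; exact hde_q
    have hset := phi_eq_set a b d e h2
    rw [hqde] at hset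
    rw [hA, hB, hD, hE] at hset
    have hmemA : a ⟨q, hqm⟩ ∈ ({d ⟨q, hqm⟩, e ⟨q, hqm⟩} : Set (Fin m → Bool)) := by
      rw [← hset]; exact Set.mem_insert _ _
    have hmemB : b ⟨q, hqm⟩ ∈ ({d ⟨q, hqm⟩, e ⟨q, hqm⟩} : Set (Fin m → Bool)) := by
      rw [← hset]; exact Set.mem_insert_iff.mpr (Or.inr rfl)
    rcases Set.mem_insert_iff.mp hmemA with hAD | hAE
    · -- subcase A = D, hence B = E
      have hBE : b ⟨q, hqm⟩ = e ⟨q, hqm⟩ := by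
        rcases Set.mem_insert_iff.mp hmemB with h | h
        · exact absurd (hAD.trans h.symm) hAB
        · exact h
      have hab_st : strToNat (a ⟨q, hqm⟩) ≠ strToNat (b ⟨q, hqm⟩) := fun hh =>
        hAB (strToNat_inj _ _ hh)
      -- δ relations from h3
      have H3 : (strToNat (c ⟨q, hqm⟩) ≤ strToNat (a ⟨q, hqm⟩) ↔
                  strToNat (a ⟨q, hqm⟩) ≤ strToNat (b ⟨q, hqm⟩)) ∨
                (strToNat (a ⟨q, hqm⟩) ≤ strToNat (c ⟨q, hqm⟩) ↔
                  strToNat (b ⟨q, hqm⟩) ≤ strToNat (a ⟨q, hqm⟩)) := by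
        rcases phi_eq_delta c d a e h3 with H | H | H | H
        · left
          have := H ⟨q, hqm⟩
          simp only [← hAD, ← hBE] at this; exact this
        · exfalso
          have := H ⟨r, hrm⟩
          rw [har', her'] at this
          omega
        · exfalso
          have := H ⟨r, hrm⟩
          rw [har', her'] at this
          omega
        · right
          have := H ⟨q, hqm⟩
          simp only [← hAD, ← hBE] at this; exact this
      have H4 : (strToNat (c ⟨q, hqm⟩) ≤ strToNat (b ⟨q, hqm⟩) ↔
                  strToNat (b ⟨q, hqm⟩) ≤ strToNat (a ⟨q, hqm⟩)) ∨
                (strToNat (b ⟨q, hqm⟩) ≤ strToNat (c ⟨q, hqm⟩) ↔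
                  strToNat (a ⟨q, hqm⟩) ≤ strToNat (b ⟨q, hqm⟩)) := by
        rcases phi_eq_delta c e b d h4 with H | H | H | H
        · left
          have := H ⟨q, hqm⟩
          simp only [← hAD, ← hBE] at this; exact this
        · exfalso
          have := H ⟨r, hrm⟩
          rw [hbr', her'] at this
          omega
        · exfalso
          have := H ⟨r, hrm⟩
          rw [hbr', her'] at this
          omega
        · right
          have := H ⟨q, hqm⟩
          simp only [← hAD, ← hBE] at this; exact this
      rcases H3 with H3 | H3 <;> rcases H4 with H4 | H4 <;> omega
    · -- subcase A = E, hence B = D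
      have hBD : b ⟨q, hqm⟩ = d ⟨q, hqm⟩ := by
        rcases Set.mem_insert_iff.mp hmemB with h | h
        · exact h
        · exact absurd (hAE.trans h.symm) hAB
      have hfdi3 := phi_eq_fdi c d a e h3 ⟨q, hqm⟩
      rw [hAE] at hfdi3
      have hz3 : firstDiffIdx (e ⟨q, hqm⟩) (e ⟨q, hqm⟩) = 0 := (fdi_eq_zero_iff _ _).mpr rfl
      rw [hz3] at hfdi3
      have hCqD : c ⟨q, hqm⟩ = d ⟨q, hqm⟩ := (fdi_eq_zero_iff _ _).mp hfdi3
      have hfdi4 := phi_eq_fdi c e b d h4 ⟨q, hqm⟩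
      rw [hBD] at hfdi4
      have hz4 : firstDiffIdx (d ⟨q, hqm⟩) (d ⟨q, hqm⟩) = 0 := (fdi_eq_zero_iff _ _).mpr rfl
      rw [hz4] at hfdi4
      have hCqE : c ⟨q, hqm⟩ = e ⟨q, hqm⟩ := (fdi_eq_zero_iff _ _).mp hfdi4
      exact hDE (hCqD.symm.trans hCqE)
  · -- Case r = p
    have hset := phi_eq_set c d a e h3
    rw [hrae, ← hrdef, hrp] at hset
    have hmem : blockAt c p ∈ ({blockAt a p, blockAt e p} : Set (Fin m → Bool)) := by
      rw [← hset]; exact Set.mem_insert _ _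
    rcases Set.mem_insert_iff.mp hmem with h | h
    · exact hca_p h
    · have : blockAt c p ≠ blockAt d p := by rw [← hrp]; exact hcd_r
      exact this (h.trans hdep.symm)
  · -- Case r > p
    set s := firstDiffBlock c e with hsdef
    have hsbd : firstDiffBlock b d = s := (phi_eq_fdb _ _ _ _ h4).symm
    have hs1 : min p (firstDiffBlock a e) ≤ s := fdb_min_le c a e hce
    have hs2 : min s (firstDiffBlock e a) ≤ p := fdb_min_le c e a (Ne.symm hac)
    have hs3 : min r (firstDiffBlock d e) ≤ s := fdb_min_le c d e hce
    rw [hrae] at hs1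
    rw [fdb_comm e a, hrae] at hs2
    rw [hqde] at hs3
    omega

end Analytic
section Helpers
variable {m : ℕ}

lemma edge_mem {a b c d e : Vtx m} {p : Vtx m × Vtx m} (hp : p ∈ edgeList a b c d e) :
    p = (a,b) ∨ p = (a,c) ∨ p = (a,d) ∨ p = (a,e) ∨ p = (b,c) ∨ p = (b,d) ∨ p = (b,e) ∨
    p = (c,d) ∨ p = (c,e) ∨ p = (d,e) := by
  simpa [edgeList] using hp

lemma nsE_mk {x y u v : Vtx m} (h1 : x ≠ u ∨ y ≠ v) (h2 : x ≠ v ∨ y ≠ u) : ¬ sE x y u v :=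
  fun h => h.elim (fun hh => h1.elim (fun g => g hh.1) (fun g => g hh.2))
    (fun hh => h2.elim (fun g => g hh.1) (fun g => g hh.2))

lemma three_le_countP {α : Type*} {l : List α} (hl : l.Nodup) {x y z : α}
    (hx : x ∈ l) (hy : y ∈ l) (hz : z ∈ l)
    (hxy : x ≠ y) (hxz : x ≠ z) (hyz : y ≠ z) (p : α → Bool)
    (hpx : p x = true) (hpy : p y = true) (hpz : p z = true) : 3 ≤ l.countP p := by
  have hnd : List.Nodup [x, y, z] := by simp [hxy, hxz, hyz]
  have hsubset : [x, y, z] ⊆ l := by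
    intro t ht
    simp only [List.mem_cons, List.not_mem_nil, or_false, List.mem_singleton] at ht
    rcases ht with rfl | rfl | rfl <;> assumption
  have hsub : List.Subperm [x, y, z] l := List.subperm_of_subset hnd hsubset
  calc 3 = List.countP p [x, y, z] := by simp [List.countP_cons, hpx, hpy, hpz]
    _ ≤ l.countP p := hsub.countP_le p

lemma colorCount_eq (a b c d e : Vtx m) (col : Color m) :
    colorCount a b c d e col = (edgeList a b c d e).countP
      (fun p => @decide (phi p.1 p.2 = col) (Classical.propDecidable _)) := by
  unfold colorCount
  rw [List.countP_map]
  rfl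

lemma no_swap_mem {a b c d e : Vtx m} (h : Distinct5 a b c d e) {P Q : Vtx m × Vtx m}
    (hP : P ∈ edgeList a b c d e) (hQ : Q ∈ edgeList a b c d e)
    (h1 : P.1 = Q.2) (h2 : P.2 = Q.1) : False := by
  obtain ⟨d1,d2,d3,d4,d5,d6,d7,d8,d9,d10⟩ := h
  rcases edge_mem hP with rfl|rfl|rfl|rfl|rfl|rfl|rfl|rfl|rfl|rfl <;>
    rcases edge_mem hQ with rfl|rfl|rfl|rfl|rfl|rfl|rfl|rfl|rfl|rfl <;> simp_all

lemma edgeList_nodup {a b c d e : Vtx m} (h : Distinct5 a b c d e) :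
    (edgeList a b c d e).Nodup := by
  obtain ⟨d1,d2,d3,d4,d5,d6,d7,d8,d9,d10⟩ := h
  simp [edgeList, List.nodup_cons, Prod.ext_iff]
  tauto

end Helpers
section Main

lemma sE_swap {m : ℕ} {x y u v : Vtx m} (h : sE x y u v) : sE y x u v :=
  h.elim (fun hh => Or.inr ⟨hh.2, hh.1⟩) (fun hh => Or.inl ⟨hh.2, hh.1⟩)

lemma sE_trans {m : ℕ} {p q x y u v : Vtx m} (h1 : sE p q x y) (h2 : sE p q u v) :
    sE x y u v := by
  rcases h1 with ⟨rfl, rfl⟩ | ⟨rfl, rfl⟩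
  · exact h2
  · exact sE_swap h2

set_option maxHeartbeats 1000000 in
theorem no_four_matchings_one_path' (m : ℕ) :
    ¬ ∃ a b c d e : Vtx m, IsConfig22222 a b c d e ∧
      ∃ col₁ col₂ col₃ col₄ : Color m,
        col₁ ≠ col₂ ∧ col₁ ≠ col₃ ∧ col₁ ≠ col₄ ∧
        col₂ ≠ col₃ ∧ col₂ ≠ col₄ ∧ col₃ ≠ col₄ ∧
        IsAttained a b c d e col₁ ∧ IsMatchingClass a b c d e col₁ ∧
        IsAttained a b c d e col₂ ∧ IsMatchingClass a b c d e col₂ ∧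
        IsAttained a b c d e col₃ ∧ IsMatchingClass a b c d e col₃ ∧
        IsAttained a b c d e col₄ ∧ IsMatchingClass a b c d e col₄ ∧
        ∀ col' : Color m, IsAttained a b c d e col' →
          col' ≠ col₁ → col' ≠ col₂ → col' ≠ col₃ → col' ≠ col₄ →
          IsPathClass a b c d e col' := by
  rintro ⟨a, b, c, d, e, ⟨hdist, hcnt⟩, col₁, col₂, col₃, col₄,
    h12, h13, h14, h23, h24, h34,
    _hA1, hM1, _hA2, hM2, _hA3, hM3, _hA4, hM4, hPath⟩
  classical
  obtain ⟨n1, n2, n3, n4, n5, n6, n7, n8, n9, n10⟩ := hdist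
  have hdist' : Distinct5 a b c d e := ⟨n1,n2,n3,n4,n5,n6,n7,n8,n9,n10⟩
  have hnodup := edgeList_nodup hdist'
  -- the vertex predicate
  let V : Vtx m → Prop := fun x => x = a ∨ x = b ∨ x = c ∨ x = d ∨ x = e
  have hVdef : ∀ x, V x ↔ (x = a ∨ x = b ∨ x = c ∨ x = d ∨ x = e) := fun _ => Iff.rfl
  have hcomp : ∀ P ∈ edgeList a b c d e, V P.1 ∧ V P.2 ∧ P.1 ≠ P.2 := by
    intro P hP
    rcases edge_mem hP with rfl|rfl|rfl|rfl|rfl|rfl|rfl|rfl|rfl|rfl <;>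
      exact ⟨by simp [hVdef], by simp [hVdef], by assumption⟩
  have hmem2 : ∀ x y, V x → V y → x ≠ y →
      (x,y) ∈ edgeList a b c d e ∨ (y,x) ∈ edgeList a b c d e := by
    intro x y hx hy hxy
    rcases (hVdef x).mp hx with rfl|rfl|rfl|rfl|rfl <;>
      rcases (hVdef y).mp hy with rfl|rfl|rfl|rfl|rfl <;>
      simp [edgeList] at hxy ⊢
  have hcount2 : ∀ P ∈ edgeList a b c d e, colorCount a b c d e (phi P.1 P.2) = 2 := by
    intro P hP
    rcases hcnt (phi P.1 P.2) with h0 | h2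
    · exfalso
      rw [colorCount_eq] at h0
      have hpos : 0 < (edgeList a b c d e).countP
          (fun p => @decide (phi p.1 p.2 = phi P.1 P.2) (Classical.propDecidable _)) :=
        List.countP_pos_iff.mpr ⟨P, hP, by simp⟩
      omega
    · exact h2
  have hc2 : ∀ x y, V x → V y → x ≠ y → colorCount a b c d e (phi x y) = 2 := by
    intro x y hx hy hxy
    rcases hmem2 x y hx hy hxy with h | h
    · exact hcount2 (x,y) h
    · rw [phi_comm x y hxy]
      exact hcount2 (y,x) h
  have orient : ∀ x y, V x → V y → x ≠ y → ∃ P, P ∈ edgeList a b c d e ∧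
      phi P.1 P.2 = phi x y ∧ sE P.1 P.2 x y := by
    intro x y hx hy hxy
    rcases hmem2 x y hx hy hxy with h | h
    · exact ⟨(x,y), h, rfl, Or.inl ⟨rfl, rfl⟩⟩
    · exact ⟨(y,x), h, phi_comm y x (Ne.symm hxy), Or.inr ⟨rfl, rfl⟩⟩
  have huniq : ∀ x y u v s t : Vtx m, V x → V y → V u → V v → V s → V t →
      x ≠ y → u ≠ v → s ≠ t → ¬ sE x y u v → ¬ sE x y s t → ¬ sE u v s t →
      phi x y = phi u v → phi x y = phi s t → False := by
    intro x y u v s t hx hy hu hv hs ht hxy huv hst nxu nxs nus exu exs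
    obtain ⟨P, hPm, hPc, hPs⟩ := orient x y hx hy hxy
    obtain ⟨Q, hQm, hQc, hQs⟩ := orient u v hu hv huv
    obtain ⟨R, hRm, hRc, hRs⟩ := orient s t hs ht hst
    have hPQ : P ≠ Q := by
      intro h
      exact nxu (sE_trans (h ▸ hPs) hQs)
    have hPR : P ≠ R := by
      intro h
      exact nxs (sE_trans (h ▸ hPs) hRs)
    have hQR : Q ≠ R := by
      intro h
      exact nus (sE_trans (h ▸ hQs) hRs)
    have h2 := hc2 x y hx hy hxy
    rw [colorCount_eq] at h2
    have h3 := three_le_countP hnodup hPm hQm hRm hPQ hPR hQR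
      (fun p => @decide (phi p.1 p.2 = phi x y) (Classical.propDecidable _))
      (by simp [hPc]) (by simp [hQc, ← exu]) (by simp [hRc, ← exs])
    omega
  -- matching class data
  obtain ⟨P1, hP1m, Q1, hQ1m, hP1c, hQ1c, m11, m12, m13, m14⟩ := hM1
  obtain ⟨P2, hP2m, Q2, hQ2m, hP2c, hQ2c, m21, m22, m23, m24⟩ := hM2
  obtain ⟨P3, hP3m, Q3, hQ3m, hP3c, hQ3c, m31, m32, m33, m34⟩ := hM3
  obtain ⟨P4, hP4m, Q4, hQ4m, hP4c, hQ4c, m41, m42, m43, m44⟩ := hM4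
  have hPQ1 : P1 ≠ Q1 := fun h => m11 (congrArg Prod.fst h)
  have hPQ2 : P2 ≠ Q2 := fun h => m21 (congrArg Prod.fst h)
  have hPQ3 : P3 ≠ Q3 := fun h => m31 (congrArg Prod.fst h)
  have hPQ4 : P4 ≠ Q4 := fun h => m41 (congrArg Prod.fst h)
  -- only two edges per matching color
  have key : ∀ (col : Color m) (Pi Qi : Vtx m × Vtx m), Pi ∈ edgeList a b c d e →
      Qi ∈ edgeList a b c d e → Pi ≠ Qi → phi Pi.1 Pi.2 = col → phi Qi.1 Qi.2 = col →
      ∀ P ∈ edgeList a b c d e, phi P.1 P.2 = col → P = Pi ∨ P = Qi := by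
    intro col Pi Qi hPim hQim hne' hPic hQic P hP hPc
    by_contra hcc
    push_neg at hcc
    have h2 := hcount2 Pi hPim
    rw [colorCount_eq, hPic] at h2
    have h3 := three_le_countP hnodup hPim hQim hP hne' hcc.1.symm hcc.2.symm
      (fun p => @decide (phi p.1 p.2 = col) (Classical.propDecidable _))
      (by simp [hPic]) (by simp [hQic]) (by simp [hPc])
    omega
  -- existence of an edge not colored col₁..col₄
  have hex : ∃ x y, V x ∧ V y ∧ x ≠ y ∧
      ¬(phi x y = col₁ ∨ phi x y = col₂ ∨ phi x y = col₃ ∨ phi x y = col₄) := by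
    by_contra hcon
    push_neg at hcon
    have hsubset : edgeList a b c d e ⊆ [P1, Q1, P2, Q2, P3, Q3, P4, Q4] := by
      intro P hP
      obtain ⟨hv1, hv2, hne⟩ := hcomp P hP
      have hor := hcon P.1 P.2 hv1 hv2 hne
      have hP' : (P.1, P.2) = P := rfl
      rcases hor with h|h|h|h
      · rcases key col₁ P1 Q1 hP1m hQ1m hPQ1 hP1c hQ1c P hP h with rfl|rfl <;> simp
      · rcases key col₂ P2 Q2 hP2m hQ2m hPQ2 hP2c hQ2c P hP h with rfl|rfl <;> simp
      · rcases key col₃ P3 Q3 hP3m hQ3m hPQ3 hP3c hQ3c P hP h with rfl|rfl <;> simp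
      · rcases key col₄ P4 Q4 hP4m hQ4m hPQ4 hP4c hQ4c P hP h with rfl|rfl <;> simp
    have hlen := (List.subperm_of_subset hnodup hsubset).length_le
    simp [edgeList] at hlen
  obtain ⟨x0, y0, hx0, hy0, hxy0, hc5⟩ := hex
  push_neg at hc5
  obtain ⟨hc51, hc52, hc53, hc54⟩ := hc5
  have hattained : IsAttained a b c d e (phi x0 y0) := by
    unfold IsAttained
    rw [hc2 x0 y0 hx0 hy0 hxy0]
    omega
  obtain ⟨P5, hP5m, Q5, hQ5m, hP5Q5, hP5c, hQ5c, hshare⟩ :=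
    hPath (phi x0 y0) hattained hc51 hc52 hc53 hc54
  -- extract the path center and endpoints
  obtain ⟨c', a', b', hVc', hVa', hVb', hc'a', hc'b', ha'b', hca5, hcb5⟩ :
      ∃ c' a' b' : Vtx m, V c' ∧ V a' ∧ V b' ∧ c' ≠ a' ∧ c' ≠ b' ∧ a' ≠ b' ∧
        phi c' a' = phi x0 y0 ∧ phi c' b' = phi x0 y0 := by
    obtain ⟨hv51, hv52, hne5⟩ := hcomp P5 hP5m
    obtain ⟨hw51, hw52, hne5'⟩ := hcomp Q5 hQ5m
    rcases hshare with h|h|h|h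
    · refine ⟨P5.1, P5.2, Q5.2, hv51, hv52, hw52, hne5, h ▸ hne5', ?_, hP5c, ?_⟩
      · intro hh; exact hP5Q5 (Prod.ext h hh)
      · rw [h]; exact hQ5c
    · refine ⟨P5.1, P5.2, Q5.1, hv51, hv52, hw51, hne5, ?_, ?_, hP5c, ?_⟩
      · intro hh; exact hne5' ((h.symm.trans hh).symm)
      · intro hh; exact no_swap_mem hdist' hP5m hQ5m h hh
      · rw [h, phi_comm Q5.2 Q5.1 (Ne.symm hne5')]; exact hQ5c
    · refine ⟨P5.2, P5.1, Q5.2, hv52, hv51, hw52, Ne.symm hne5, ?_, ?_, ?_, ?_⟩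
      · intro hh; exact hne5' (h.symm.trans hh)
      · intro hh; exact no_swap_mem hdist' hP5m hQ5m hh h
      · rw [phi_comm P5.2 P5.1 (Ne.symm hne5)]; exact hP5c
      · rw [h]; exact hQ5c
    · refine ⟨P5.2, P5.1, Q5.1, hv52, hv51, hw51, Ne.symm hne5, ?_, ?_, ?_, ?_⟩
      · intro hh; exact hne5' ((h.symm.trans hh).symm)
      · intro hh; exact hP5Q5 (Prod.ext hh h)
      · rw [phi_comm P5.2 P5.1 (Ne.symm hne5)]; exact hP5c
      · rw [h, phi_comm Q5.2 Q5.1 (Ne.symm hne5')]; exact hQ5c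
  -- path class uniqueness
  have hpathu : ∀ u v, V u → V v → u ≠ v → phi u v = phi x0 y0 →
      sE u v c' a' ∨ sE u v c' b' := by
    intro u v hu hv huv hc
    by_contra hcc
    push_neg at hcc
    exact huniq u v c' a' c' b' hu hv hVc' hVa' hVc' hVb' huv hc'a' hc'b'
      hcc.1 hcc.2 (nsE_mk (Or.inr ha'b') (Or.inl hc'b'))
      (hc.trans hca5.symm) (hc.trans hcb5.symm)
  -- the two remaining vertices
  have hVfin : ∀ t : Vtx m, V t ↔ t ∈ ({a,b,c,d,e} : Finset (Vtx m)) := by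
    intro t; simp [hVdef]
  have hcard5 : ({a,b,c,d,e} : Finset (Vtx m)).card = 5 := by
    rw [Finset.card_insert_of_notMem (by simp [n1,n2,n3,n4]),
        Finset.card_insert_of_notMem (by simp [n5,n6,n7]),
        Finset.card_insert_of_notMem (by simp [n8,n9]),
        Finset.card_insert_of_notMem (by simp [n10]),
        Finset.card_singleton]
  have hsub3 : ({c', a', b'} : Finset (Vtx m)) ⊆ {a,b,c,d,e} := by
    intro t ht
    simp only [Finset.mem_insert, Finset.mem_singleton] at ht
    rcases ht with rfl|rfl|rfl
    · exact (hVfin _).mp hVc'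
    · exact (hVfin _).mp hVa'
    · exact (hVfin _).mp hVb'
  have hcard3 : ({c', a', b'} : Finset (Vtx m)).card = 3 := by
    rw [Finset.card_insert_of_notMem (by simp [hc'a', hc'b']),
        Finset.card_insert_of_notMem (by simp [ha'b']),
        Finset.card_singleton]
  have hcard2 : (({a,b,c,d,e} : Finset (Vtx m)) \ {c', a', b'}).card = 2 := by
    rw [Finset.card_sdiff_of_subset hsub3, hcard5, hcard3]
  obtain ⟨d', e', hd'e', hS⟩ := Finset.card_eq_two.mp hcard2
  have hd'mem : d' ∈ (({a,b,c,d,e} : Finset (Vtx m)) \ {c', a', b'}) := by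
    rw [hS]; simp
  have he'mem : e' ∈ (({a,b,c,d,e} : Finset (Vtx m)) \ {c', a', b'}) := by
    rw [hS]; simp
  rw [Finset.mem_sdiff] at hd'mem he'mem
  have hVd' : V d' := (hVfin _).mpr hd'mem.1
  have hVe' : V e' := (hVfin _).mpr he'mem.1
  have hd'c : d' ≠ c' := by have := hd'mem.2; simp at this; exact this.1
  have hd'a : d' ≠ a' := by have := hd'mem.2; simp at this; exact this.2.1
  have hd'b : d' ≠ b' := by have := hd'mem.2; simp at this; exact this.2.2
  have he'c : e' ≠ c' := by have := he'mem.2; simp at this; exact this.1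
  have he'a : e' ≠ a' := by have := he'mem.2; simp at this; exact this.2.1
  have he'b : e' ≠ b' := by have := he'mem.2; simp at this; exact this.2.2
  have hcov : ∀ t, V t → t = c' ∨ t = a' ∨ t = b' ∨ t = d' ∨ t = e' := by
    intro t ht
    by_cases h : t = c' ∨ t = a' ∨ t = b'
    · rcases h with h|h|h
      · exact Or.inl h
      · exact Or.inr (Or.inl h)
      · exact Or.inr (Or.inr (Or.inl h))
    · push_neg at h
      have hmem : t ∈ (({a,b,c,d,e} : Finset (Vtx m)) \ {c', a', b'}) :=
        Finset.mem_sdiff.mpr ⟨(hVfin t).mp ht, by simp [h.1, h.2.1, h.2.2]⟩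
      rw [hS] at hmem
      simp only [Finset.mem_insert, Finset.mem_singleton] at hmem
      rcases hmem with h'|h'
      · exact Or.inr (Or.inr (Or.inr (Or.inl h')))
      · exact Or.inr (Or.inr (Or.inr (Or.inr h')))
  -- completeness: every edge color is one of the five class colors
  have hcomplete : ∀ x y, V x → V y → x ≠ y →
      phi x y = col₁ ∨ phi x y = col₂ ∨ phi x y = col₃ ∨ phi x y = col₄ ∨
      phi x y = phi x0 y0 := by
    intro x y hx hy hxy
    by_contra hcc
    push_neg at hcc
    obtain ⟨g1, g2, g3, g4, g5⟩ := hcc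
    obtain ⟨EE, hEm, hEc0, hEs⟩ := orient x y hx hy hxy
    have hEc : phi EE.1 EE.2 = phi x y := hEc0
    have cne : ∀ (U W : Vtx m × Vtx m), phi U.1 U.2 ≠ phi W.1 W.2 → U ≠ W :=
      fun U W h hq => h (by rw [hq])
    have q0_1 : P1 ≠ Q1 := hPQ1
    have q0_2 : P1 ≠ P2 := cne P1 P2 (by rw [hP1c, hP2c]; exact h12)
    have q0_3 : P1 ≠ Q2 := cne P1 Q2 (by rw [hP1c, hQ2c]; exact h12)
    have q0_4 : P1 ≠ P3 := cne P1 P3 (by rw [hP1c, hP3c]; exact h13)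
    have q0_5 : P1 ≠ Q3 := cne P1 Q3 (by rw [hP1c, hQ3c]; exact h13)
    have q0_6 : P1 ≠ P4 := cne P1 P4 (by rw [hP1c, hP4c]; exact h14)
    have q0_7 : P1 ≠ Q4 := cne P1 Q4 (by rw [hP1c, hQ4c]; exact h14)
    have q0_8 : P1 ≠ P5 := cne P1 P5 (by rw [hP1c, hP5c]; exact Ne.symm hc51)
    have q0_9 : P1 ≠ Q5 := cne P1 Q5 (by rw [hP1c, hQ5c]; exact Ne.symm hc51)
    have q0_10 : P1 ≠ EE := cne P1 EE (by rw [hP1c, hEc]; exact Ne.symm g1)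
    have q1_2 : Q1 ≠ P2 := cne Q1 P2 (by rw [hQ1c, hP2c]; exact h12)
    have q1_3 : Q1 ≠ Q2 := cne Q1 Q2 (by rw [hQ1c, hQ2c]; exact h12)
    have q1_4 : Q1 ≠ P3 := cne Q1 P3 (by rw [hQ1c, hP3c]; exact h13)
    have q1_5 : Q1 ≠ Q3 := cne Q1 Q3 (by rw [hQ1c, hQ3c]; exact h13)
    have q1_6 : Q1 ≠ P4 := cne Q1 P4 (by rw [hQ1c, hP4c]; exact h14)
    have q1_7 : Q1 ≠ Q4 := cne Q1 Q4 (by rw [hQ1c, hQ4c]; exact h14)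
    have q1_8 : Q1 ≠ P5 := cne Q1 P5 (by rw [hQ1c, hP5c]; exact Ne.symm hc51)
    have q1_9 : Q1 ≠ Q5 := cne Q1 Q5 (by rw [hQ1c, hQ5c]; exact Ne.symm hc51)
    have q1_10 : Q1 ≠ EE := cne Q1 EE (by rw [hQ1c, hEc]; exact Ne.symm g1)
    have q2_3 : P2 ≠ Q2 := hPQ2
    have q2_4 : P2 ≠ P3 := cne P2 P3 (by rw [hP2c, hP3c]; exact h23)
    have q2_5 : P2 ≠ Q3 := cne P2 Q3 (by rw [hP2c, hQ3c]; exact h23)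
    have q2_6 : P2 ≠ P4 := cne P2 P4 (by rw [hP2c, hP4c]; exact h24)
    have q2_7 : P2 ≠ Q4 := cne P2 Q4 (by rw [hP2c, hQ4c]; exact h24)
    have q2_8 : P2 ≠ P5 := cne P2 P5 (by rw [hP2c, hP5c]; exact Ne.symm hc52)
    have q2_9 : P2 ≠ Q5 := cne P2 Q5 (by rw [hP2c, hQ5c]; exact Ne.symm hc52)
    have q2_10 : P2 ≠ EE := cne P2 EE (by rw [hP2c, hEc]; exact Ne.symm g2)
    have q3_4 : Q2 ≠ P3 := cne Q2 P3 (by rw [hQ2c, hP3c]; exact h23)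
    have q3_5 : Q2 ≠ Q3 := cne Q2 Q3 (by rw [hQ2c, hQ3c]; exact h23)
    have q3_6 : Q2 ≠ P4 := cne Q2 P4 (by rw [hQ2c, hP4c]; exact h24)
    have q3_7 : Q2 ≠ Q4 := cne Q2 Q4 (by rw [hQ2c, hQ4c]; exact h24)
    have q3_8 : Q2 ≠ P5 := cne Q2 P5 (by rw [hQ2c, hP5c]; exact Ne.symm hc52)
    have q3_9 : Q2 ≠ Q5 := cne Q2 Q5 (by rw [hQ2c, hQ5c]; exact Ne.symm hc52)
    have q3_10 : Q2 ≠ EE := cne Q2 EE (by rw [hQ2c, hEc]; exact Ne.symm g2)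
    have q4_5 : P3 ≠ Q3 := hPQ3
    have q4_6 : P3 ≠ P4 := cne P3 P4 (by rw [hP3c, hP4c]; exact h34)
    have q4_7 : P3 ≠ Q4 := cne P3 Q4 (by rw [hP3c, hQ4c]; exact h34)
    have q4_8 : P3 ≠ P5 := cne P3 P5 (by rw [hP3c, hP5c]; exact Ne.symm hc53)
    have q4_9 : P3 ≠ Q5 := cne P3 Q5 (by rw [hP3c, hQ5c]; exact Ne.symm hc53)
    have q4_10 : P3 ≠ EE := cne P3 EE (by rw [hP3c, hEc]; exact Ne.symm g3)
    have q5_6 : Q3 ≠ P4 := cne Q3 P4 (by rw [hQ3c, hP4c]; exact h34)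
    have q5_7 : Q3 ≠ Q4 := cne Q3 Q4 (by rw [hQ3c, hQ4c]; exact h34)
    have q5_8 : Q3 ≠ P5 := cne Q3 P5 (by rw [hQ3c, hP5c]; exact Ne.symm hc53)
    have q5_9 : Q3 ≠ Q5 := cne Q3 Q5 (by rw [hQ3c, hQ5c]; exact Ne.symm hc53)
    have q5_10 : Q3 ≠ EE := cne Q3 EE (by rw [hQ3c, hEc]; exact Ne.symm g3)
    have q6_7 : P4 ≠ Q4 := hPQ4
    have q6_8 : P4 ≠ P5 := cne P4 P5 (by rw [hP4c, hP5c]; exact Ne.symm hc54)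
    have q6_9 : P4 ≠ Q5 := cne P4 Q5 (by rw [hP4c, hQ5c]; exact Ne.symm hc54)
    have q6_10 : P4 ≠ EE := cne P4 EE (by rw [hP4c, hEc]; exact Ne.symm g4)
    have q7_8 : Q4 ≠ P5 := cne Q4 P5 (by rw [hQ4c, hP5c]; exact Ne.symm hc54)
    have q7_9 : Q4 ≠ Q5 := cne Q4 Q5 (by rw [hQ4c, hQ5c]; exact Ne.symm hc54)
    have q7_10 : Q4 ≠ EE := cne Q4 EE (by rw [hQ4c, hEc]; exact Ne.symm g4)
    have q8_9 : P5 ≠ Q5 := hP5Q5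
    have q8_10 : P5 ≠ EE := cne P5 EE (by rw [hP5c, hEc]; exact Ne.symm g5)
    have q9_10 : Q5 ≠ EE := cne Q5 EE (by rw [hQ5c, hEc]; exact Ne.symm g5)
    have hnodup11 : List.Nodup [P1,Q1,P2,Q2,P3,Q3,P4,Q4,P5,Q5,EE] := by
      simp [List.nodup_cons, q0_1, q0_2, q0_3, q0_4, q0_5, q0_6, q0_7, q0_8, q0_9, q0_10, q1_2, q1_3, q1_4, q1_5, q1_6, q1_7, q1_8, q1_9, q1_10, q2_3, q2_4, q2_5, q2_6, q2_7, q2_8, q2_9, q2_10, q3_4, q3_5, q3_6, q3_7, q3_8, q3_9, q3_10, q4_5, q4_6, q4_7, q4_8, q4_9, q4_10, q5_6, q5_7, q5_8, q5_9, q5_10, q6_7, q6_8, q6_9, q6_10, q7_8, q7_9, q7_10, q8_9, q8_10, q9_10]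
    have hsubset11 : [P1,Q1,P2,Q2,P3,Q3,P4,Q4,P5,Q5,EE] ⊆ edgeList a b c d e := by
      intro t ht
      simp only [List.mem_cons, List.not_mem_nil, or_false] at ht
      rcases ht with rfl|rfl|rfl|rfl|rfl|rfl|rfl|rfl|rfl|rfl|rfl <;> assumption
    have hlen := (List.subperm_of_subset hnodup11 hsubset11).length_le
    simp [edgeList] at hlen
  -- partner step via a given matching class
  have stepi : ∀ (col : Color m) (Pi Qi : Vtx m × Vtx m), Pi ∈ edgeList a b c d e →
      Qi ∈ edgeList a b c d e → phi Pi.1 Pi.2 = col → phi Qi.1 Qi.2 = col →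
      Pi.1 ≠ Qi.1 → Pi.1 ≠ Qi.2 → Pi.2 ≠ Qi.1 → Pi.2 ≠ Qi.2 →
      ∀ x y, V x → V y → x ≠ y → phi x y = col →
      ∃ z w, V z ∧ V w ∧ z ≠ w ∧ z ≠ x ∧ z ≠ y ∧ w ≠ x ∧ w ≠ y ∧ phi x y = phi z w := by
    intro col Pi Qi hPim hQim hPic hQic e1 e2 e3 e4 x y hx hy hxy hxyc
    obtain ⟨hPi1, hPi2, hPine⟩ := hcomp Pi hPim
    obtain ⟨hQi1, hQi2, hQine⟩ := hcomp Qi hQim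
    have hor : sE x y Pi.1 Pi.2 ∨ sE x y Qi.1 Qi.2 := by
      by_contra hcc
      push_neg at hcc
      exact huniq x y Pi.1 Pi.2 Qi.1 Qi.2 hx hy hPi1 hPi2 hQi1 hQi2 hxy hPine hQine
        hcc.1 hcc.2 (nsE_mk (Or.inl e1) (Or.inl e2)) (hxyc.trans hPic.symm)
        (hxyc.trans hQic.symm)
    rcases hor with h | h
    · rcases h with ⟨rfl, rfl⟩ | ⟨rfl, rfl⟩
      · exact ⟨Qi.1, Qi.2, hQi1, hQi2, hQine, Ne.symm e1, Ne.symm e3, Ne.symm e2,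
          Ne.symm e4, hPic.trans hQic.symm⟩
      · exact ⟨Qi.1, Qi.2, hQi1, hQi2, hQine, Ne.symm e3, Ne.symm e1, Ne.symm e4,
          Ne.symm e2, (phi_comm Pi.2 Pi.1 (Ne.symm hPine)).trans (hPic.trans hQic.symm)⟩
    · rcases h with ⟨rfl, rfl⟩ | ⟨rfl, rfl⟩
      · exact ⟨Pi.1, Pi.2, hPi1, hPi2, hPine, e1, e2, e3, e4, hQic.trans hPic.symm⟩
      · exact ⟨Pi.1, Pi.2, hPi1, hPi2, hPine, e2, e1, e4, e3,
          (phi_comm Qi.2 Qi.1 (Ne.symm hQine)).trans (hQic.trans hPic.symm)⟩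
  -- general partner step
  have step : ∀ x y, V x → V y → x ≠ y → ¬ sE x y c' a' → ¬ sE x y c' b' →
      ∃ z w, V z ∧ V w ∧ z ≠ w ∧ z ≠ x ∧ z ≠ y ∧ w ≠ x ∧ w ≠ y ∧ phi x y = phi z w := by
    intro x y hx hy hxy nn1 nn2
    rcases hcomplete x y hx hy hxy with h|h|h|h|h
    · exact stepi col₁ P1 Q1 hP1m hQ1m hP1c hQ1c m11 m12 m13 m14 x y hx hy hxy h
    · exact stepi col₂ P2 Q2 hP2m hQ2m hP2c hQ2c m21 m22 m23 m24 x y hx hy hxy h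
    · exact stepi col₃ P3 Q3 hP3m hQ3m hP3c hQ3c m31 m32 m33 m34 x y hx hy hxy h
    · exact stepi col₄ P4 Q4 hP4m hQ4m hP4c hQ4c m41 m42 m43 m44 x y hx hy hxy h
    · rcases hpathu x y hx hy hxy h with hs|hs
      · exact absurd hs nn1
      · exact absurd hs nn2
  have L4 : ∀ A B D E : Vtx m, V A → V B → V D → V E →
      A ≠ B → A ≠ D → A ≠ E → B ≠ D → B ≠ E → D ≠ E →
      c' ≠ A → c' ≠ B → c' ≠ D → c' ≠ E →
      D ≠ a' → D ≠ b' → E ≠ a' → E ≠ b' →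
      phi c' A = phi x0 y0 → phi c' B = phi x0 y0 →
      (∀ u v, V u → V v → u ≠ v → phi u v = phi x0 y0 → sE u v c' A ∨ sE u v c' B) →
      (∀ t, V t → t = c' ∨ t = A ∨ t = B ∨ t = D ∨ t = E) →
      phi A B = phi D E → phi c' D = phi A E → phi c' E = phi A D → False := by
    intro A B D E hVA hVB hVD hVE nAB nAD nAE nBD nBE nDE ncA ncB ncD ncE nDa nDb nEa nEb h5A h5B hcl5 cov hM1 hM2 hX
    obtain ⟨z, w, hVz, hVw, hzw, hz1, hz2, hw1, hw2, hphi⟩ := step B D hVB hVD nBD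
      (nsE_mk (Or.inl (Ne.symm ncB)) (Or.inr (Ne.symm ncD))) (nsE_mk (Or.inl (Ne.symm ncB)) (Or.inr (Ne.symm ncD)))
    have blockPath : phi B D = phi x0 y0 → False := by
      intro h5
      rcases hcl5 B D hVB hVD nBD h5 with hs | hs
      · exact hs.elim (fun h' => ncB h'.1.symm) (fun h' => nAB h'.1.symm)
      · exact hs.elim (fun h' => ncB h'.1.symm) (fun h' => ncD h'.2.symm)
    have blockAE : phi B D = phi A E → False := fun hh =>
      huniq A E c' D B D hVA hVE hVc' hVD hVB hVD nAE ncD nBD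
        (nsE_mk (Or.inl (Ne.symm ncA)) (Or.inl nAD))
        (nsE_mk (Or.inl nAB) (Or.inl nAD))
        (nsE_mk (Or.inl ncB) (Or.inl ncD))
        hM2.symm hh.symm
    have blockCE : phi B D = phi c' E → False := fun hh =>
      huniq A D c' E B D hVA hVD hVc' hVE hVB hVD nAD ncE nBD
        (nsE_mk (Or.inl (Ne.symm ncA)) (Or.inl nAE))
        (nsE_mk (Or.inl nAB) (Or.inl nAD))
        (nsE_mk (Or.inl ncB) (Or.inl ncD))
        hX.symm (hX.symm.trans hh.symm)
    rcases cov z hVz with hz|hz|hz|hz|hz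
    · rcases cov w hVw with hw|hw|hw|hw|hw
      · exact hzw (hz.trans hw.symm)
      · have hphi2 : phi B D = phi c' A := by rw [hz, hw] at hphi; exact hphi
        exact blockPath (hphi2.trans h5A)
      · exact absurd hw hw1
      · exact absurd hw hw2
      · have hphi2 : phi B D = phi c' E := by rw [hz, hw] at hphi; exact hphi
        exact blockCE hphi2
    · rcases cov w hVw with hw|hw|hw|hw|hw
      · have hphi2 : phi B D = phi c' A := by rw [hz, hw] at hphi; exact hphi.trans (phi_comm A c' (Ne.symm ncA))
        exact blockPath (hphi2.trans h5A)
      · exact hzw (hz.trans hw.symm)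
      · exact absurd hw hw1
      · exact absurd hw hw2
      · have hphi2 : phi B D = phi A E := by rw [hz, hw] at hphi; exact hphi
        exact blockAE hphi2
    · exact absurd hz hz1
    · exact absurd hz hz2
    · rcases cov w hVw with hw|hw|hw|hw|hw
      · have hphi2 : phi B D = phi c' E := by rw [hz, hw] at hphi; exact hphi.trans (phi_comm E c' (Ne.symm ncE))
        exact blockCE hphi2
      · have hphi2 : phi B D = phi A E := by rw [hz, hw] at hphi; exact hphi.trans (phi_comm E A (Ne.symm nAE))
        exact blockAE hphi2
      · exact absurd hw hw1
      · exact absurd hw hw2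
      · exact hzw (hz.trans hw.symm)
  have L3 : ∀ A B D E : Vtx m, V A → V B → V D → V E →
      A ≠ B → A ≠ D → A ≠ E → B ≠ D → B ≠ E → D ≠ E →
      c' ≠ A → c' ≠ B → c' ≠ D → c' ≠ E →
      D ≠ a' → D ≠ b' → E ≠ a' → E ≠ b' →
      phi c' A = phi x0 y0 → phi c' B = phi x0 y0 →
      (∀ u v, V u → V v → u ≠ v → phi u v = phi x0 y0 → sE u v c' A ∨ sE u v c' B) →
      (∀ t, V t → t = c' ∨ t = A ∨ t = B ∨ t = D ∨ t = E) →
      phi A B = phi D E → phi c' D = phi A E → False := by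
    intro A B D E hVA hVB hVD hVE nAB nAD nAE nBD nBE nDE ncA ncB ncD ncE nDa nDb nEa nEb h5A h5B hcl5 cov hM1 hM2
    obtain ⟨z, w, hVz, hVw, hzw, hz1, hz2, hw1, hw2, hphi⟩ := step c' E hVc' hVE ncE
      (nsE_mk (Or.inr nEa) (Or.inr (Ne.symm ncE))) (nsE_mk (Or.inr nEb) (Or.inr (Ne.symm ncE)))
    have blockAB : phi c' E = phi A B → False := fun hh =>
      huniq A B D E c' E hVA hVB hVD hVE hVc' hVE nAB nDE ncE
        (nsE_mk (Or.inl nAD) (Or.inl nAE))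
        (nsE_mk (Or.inl (Ne.symm ncA)) (Or.inl nAE))
        (nsE_mk (Or.inl (Ne.symm ncD)) (Or.inl nDE))
        hM1 hh.symm
    have blockBD : phi c' E = phi B D → False := fun hh =>
      AL A B c' D E nAB (Ne.symm ncA) nAD nAE (Ne.symm ncB) nBD nBE ncD ncE nDE
        (h5A.trans h5B.symm) hM1 hM2 hh
    rcases cov z hVz with hz|hz|hz|hz|hz
    · exact absurd hz hz1
    · rcases cov w hVw with hw|hw|hw|hw|hw
      · exact absurd hw hw1
      · exact hzw (hz.trans hw.symm)
      · have hphi2 : phi c' E = phi A B := by rw [hz, hw] at hphi; exact hphi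
        exact blockAB hphi2
      · have hphi2 : phi c' E = phi A D := by rw [hz, hw] at hphi; exact hphi
        exact L4 A B D E hVA hVB hVD hVE nAB nAD nAE nBD nBE nDE ncA ncB ncD ncE nDa nDb nEa nEb h5A h5B hcl5 cov hM1 hM2 hphi2
      · exact absurd hw hw2
    · rcases cov w hVw with hw|hw|hw|hw|hw
      · exact absurd hw hw1
      · have hphi2 : phi c' E = phi A B := by rw [hz, hw] at hphi; exact hphi.trans (phi_comm B A (Ne.symm nAB))
        exact blockAB hphi2
      · exact hzw (hz.trans hw.symm)
      · have hphi2 : phi c' E = phi B D := by rw [hz, hw] at hphi; exact hphi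
        exact blockBD hphi2
      · exact absurd hw hw2
    · rcases cov w hVw with hw|hw|hw|hw|hw
      · exact absurd hw hw1
      · have hphi2 : phi c' E = phi A D := by rw [hz, hw] at hphi; exact hphi.trans (phi_comm D A (Ne.symm nAD))
        exact L4 A B D E hVA hVB hVD hVE nAB nAD nAE nBD nBE nDE ncA ncB ncD ncE nDa nDb nEa nEb h5A h5B hcl5 cov hM1 hM2 hphi2
      · have hphi2 : phi c' E = phi B D := by rw [hz, hw] at hphi; exact hphi.trans (phi_comm D B (Ne.symm nBD))
        exact blockBD hphi2
      · exact hzw (hz.trans hw.symm)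
      · exact absurd hw hw2
    · exact absurd hz hz2
  have L2 : ∀ A B D E : Vtx m, V A → V B → V D → V E →
      A ≠ B → A ≠ D → A ≠ E → B ≠ D → B ≠ E → D ≠ E →
      c' ≠ A → c' ≠ B → c' ≠ D → c' ≠ E →
      D ≠ a' → D ≠ b' → E ≠ a' → E ≠ b' →
      phi c' A = phi x0 y0 → phi c' B = phi x0 y0 →
      (∀ u v, V u → V v → u ≠ v → phi u v = phi x0 y0 → sE u v c' A ∨ sE u v c' B) →
      (∀ t, V t → t = c' ∨ t = A ∨ t = B ∨ t = D ∨ t = E) →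
      phi A B = phi D E → False := by
    intro A B D E hVA hVB hVD hVE nAB nAD nAE nBD nBE nDE ncA ncB ncD ncE nDa nDb nEa nEb h5A h5B hcl5 cov hM1
    have covsw : ∀ t, V t → t = c' ∨ t = B ∨ t = A ∨ t = D ∨ t = E := by
      intro t ht
      rcases cov t ht with h|h|h|h|h
      exacts [Or.inl h, Or.inr (Or.inr (Or.inl h)), Or.inr (Or.inl h),
        Or.inr (Or.inr (Or.inr (Or.inl h))), Or.inr (Or.inr (Or.inr (Or.inr h)))]
    have hcl5sw : ∀ u v, V u → V v → u ≠ v → phi u v = phi x0 y0 → sE u v c' B ∨ sE u v c' A :=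
      fun u v hu hv huv hcl => Or.symm (hcl5 u v hu hv huv hcl)
    obtain ⟨z, w, hVz, hVw, hzw, hz1, hz2, hw1, hw2, hphi⟩ := step c' D hVc' hVD ncD
      (nsE_mk (Or.inr nDa) (Or.inr (Ne.symm ncD))) (nsE_mk (Or.inr nDb) (Or.inr (Ne.symm ncD)))
    have blockAB : phi c' D = phi A B → False := fun hh =>
      huniq A B D E c' D hVA hVB hVD hVE hVc' hVD nAB nDE ncD
        (nsE_mk (Or.inl nAD) (Or.inl nAE))
        (nsE_mk (Or.inl (Ne.symm ncA)) (Or.inl nAD))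
        (nsE_mk (Or.inl (Ne.symm ncD)) (Or.inr (Ne.symm ncE)))
        hM1 hh.symm
    rcases cov z hVz with hz|hz|hz|hz|hz
    · exact absurd hz hz1
    · rcases cov w hVw with hw|hw|hw|hw|hw
      · exact absurd hw hw1
      · exact hzw (hz.trans hw.symm)
      · have hphi2 : phi c' D = phi A B := by rw [hz, hw] at hphi; exact hphi
        exact blockAB hphi2
      · exact absurd hw hw2
      · have hphi2 : phi c' D = phi A E := by rw [hz, hw] at hphi; exact hphi
        exact L3 A B D E hVA hVB hVD hVE nAB nAD nAE nBD nBE nDE ncA ncB ncD ncE nDa nDb nEa nEb h5A h5B hcl5 cov hM1 hphi2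
    · rcases cov w hVw with hw|hw|hw|hw|hw
      · exact absurd hw hw1
      · have hphi2 : phi c' D = phi A B := by rw [hz, hw] at hphi; exact hphi.trans (phi_comm B A (Ne.symm nAB))
        exact blockAB hphi2
      · exact hzw (hz.trans hw.symm)
      · exact absurd hw hw2
      · have hphi2 : phi c' D = phi B E := by rw [hz, hw] at hphi; exact hphi
        exact L3 B A D E hVB hVA hVD hVE (Ne.symm nAB) nBD nBE nAD nAE nDE ncB ncA ncD ncE nDa nDb nEa nEb h5B h5A hcl5sw covsw ((phi_comm B A (Ne.symm nAB)).trans hM1) hphi2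
    · exact absurd hz hz2
    · rcases cov w hVw with hw|hw|hw|hw|hw
      · exact absurd hw hw1
      · have hphi2 : phi c' D = phi A E := by rw [hz, hw] at hphi; exact hphi.trans (phi_comm E A (Ne.symm nAE))
        exact L3 A B D E hVA hVB hVD hVE nAB nAD nAE nBD nBE nDE ncA ncB ncD ncE nDa nDb nEa nEb h5A h5B hcl5 cov hM1 hphi2
      · have hphi2 : phi c' D = phi B E := by rw [hz, hw] at hphi; exact hphi.trans (phi_comm E B (Ne.symm nBE))
        exact L3 B A D E hVB hVA hVD hVE (Ne.symm nAB) nBD nBE nAD nAE nDE ncB ncA ncD ncE nDa nDb nEa nEb h5B h5A hcl5sw covsw ((phi_comm B A (Ne.symm nAB)).trans hM1) hphi2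
      · exact absurd hw hw2
      · exact hzw (hz.trans hw.symm)
  have L5' : ∀ A B D E : Vtx m, V A → V B → V D → V E →
      A ≠ B → A ≠ D → A ≠ E → B ≠ D → B ≠ E → D ≠ E →
      c' ≠ A → c' ≠ B → c' ≠ D → c' ≠ E →
      D ≠ a' → D ≠ b' → E ≠ a' → E ≠ b' →
      phi c' A = phi x0 y0 → phi c' B = phi x0 y0 →
      (∀ u v, V u → V v → u ≠ v → phi u v = phi x0 y0 → sE u v c' A ∨ sE u v c' B) →
      (∀ t, V t → t = c' ∨ t = A ∨ t = B ∨ t = D ∨ t = E) →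
      phi A B = phi c' D → phi c' E = phi A D → phi B D = phi A E → False := by
    intro A B D E hVA hVB hVD hVE nAB nAD nAE nBD nBE nDE ncA ncB ncD ncE nDa nDb nEa nEb h5A h5B hcl5 cov hM1' hM2' hh0
    obtain ⟨z, w, hVz, hVw, hzw, hz1, hz2, hw1, hw2, hphi⟩ := step B E hVB hVE nBE
      (nsE_mk (Or.inl (Ne.symm ncB)) (Or.inr (Ne.symm ncE))) (nsE_mk (Or.inl (Ne.symm ncB)) (Or.inr (Ne.symm ncE)))
    have blockPath : phi B E = phi x0 y0 → False := by
      intro h5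
      rcases hcl5 B E hVB hVE nBE h5 with hs | hs
      · exact hs.elim (fun h' => ncB h'.1.symm) (fun h' => nAB h'.1.symm)
      · exact hs.elim (fun h' => ncB h'.1.symm) (fun h' => ncE h'.2.symm)
    have blockAD : phi B E = phi A D → False := fun hh =>
      huniq A D c' E B E hVA hVD hVc' hVE hVB hVE nAD ncE nBE
        (nsE_mk (Or.inl (Ne.symm ncA)) (Or.inl nAE))
        (nsE_mk (Or.inl nAB) (Or.inl nAE))
        (nsE_mk (Or.inl ncB) (Or.inl ncE))
        hM2'.symm hh.symm
    have blockCD : phi B E = phi c' D → False := fun hh =>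
      huniq A B c' D B E hVA hVB hVc' hVD hVB hVE nAB ncD nBE
        (nsE_mk (Or.inl (Ne.symm ncA)) (Or.inl nAD))
        (nsE_mk (Or.inl nAB) (Or.inl nAE))
        (nsE_mk (Or.inl ncB) (Or.inl ncE))
        hM1' (hM1'.trans hh.symm)
    rcases cov z hVz with hz|hz|hz|hz|hz
    · rcases cov w hVw with hw|hw|hw|hw|hw
      · exact hzw (hz.trans hw.symm)
      · have hphi2 : phi B E = phi c' A := by rw [hz, hw] at hphi; exact hphi
        exact blockPath (hphi2.trans h5A)
      · exact absurd hw hw1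
      · have hphi2 : phi B E = phi c' D := by rw [hz, hw] at hphi; exact hphi
        exact blockCD hphi2
      · exact absurd hw hw2
    · rcases cov w hVw with hw|hw|hw|hw|hw
      · have hphi2 : phi B E = phi c' A := by rw [hz, hw] at hphi; exact hphi.trans (phi_comm A c' (Ne.symm ncA))
        exact blockPath (hphi2.trans h5A)
      · exact hzw (hz.trans hw.symm)
      · exact absurd hw hw1
      · have hphi2 : phi B E = phi A D := by rw [hz, hw] at hphi; exact hphi
        exact blockAD hphi2
      · exact absurd hw hw2
    · exact absurd hz hz1
    · rcases cov w hVw with hw|hw|hw|hw|hw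
      · have hphi2 : phi B E = phi c' D := by rw [hz, hw] at hphi; exact hphi.trans (phi_comm D c' (Ne.symm ncD))
        exact blockCD hphi2
      · have hphi2 : phi B E = phi A D := by rw [hz, hw] at hphi; exact hphi.trans (phi_comm D A (Ne.symm nAD))
        exact blockAD hphi2
      · exact absurd hw hw1
      · exact hzw (hz.trans hw.symm)
      · exact absurd hw hw2
    · exact absurd hz hz2
  have L4' : ∀ A B D E : Vtx m, V A → V B → V D → V E →
      A ≠ B → A ≠ D → A ≠ E → B ≠ D → B ≠ E → D ≠ E →
      c' ≠ A → c' ≠ B → c' ≠ D → c' ≠ E →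
      D ≠ a' → D ≠ b' → E ≠ a' → E ≠ b' →
      phi c' A = phi x0 y0 → phi c' B = phi x0 y0 →
      (∀ u v, V u → V v → u ≠ v → phi u v = phi x0 y0 → sE u v c' A ∨ sE u v c' B) →
      (∀ t, V t → t = c' ∨ t = A ∨ t = B ∨ t = D ∨ t = E) →
      phi A B = phi c' D → phi c' E = phi A D → False := by
    intro A B D E hVA hVB hVD hVE nAB nAD nAE nBD nBE nDE ncA ncB ncD ncE nDa nDb nEa nEb h5A h5B hcl5 cov hM1' hM2'
    obtain ⟨z, w, hVz, hVw, hzw, hz1, hz2, hw1, hw2, hphi⟩ := step B D hVB hVD nBD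
      (nsE_mk (Or.inl (Ne.symm ncB)) (Or.inr (Ne.symm ncD))) (nsE_mk (Or.inl (Ne.symm ncB)) (Or.inr (Ne.symm ncD)))
    have blockPath : phi B D = phi x0 y0 → False := by
      intro h5
      rcases hcl5 B D hVB hVD nBD h5 with hs | hs
      · exact hs.elim (fun h' => ncB h'.1.symm) (fun h' => nAB h'.1.symm)
      · exact hs.elim (fun h' => ncB h'.1.symm) (fun h' => ncD h'.2.symm)
    have blockCE : phi B D = phi c' E → False := fun hh =>
      huniq A D c' E B D hVA hVD hVc' hVE hVB hVD nAD ncE nBD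
        (nsE_mk (Or.inl (Ne.symm ncA)) (Or.inl nAE))
        (nsE_mk (Or.inl nAB) (Or.inl nAD))
        (nsE_mk (Or.inl ncB) (Or.inl ncD))
        hM2'.symm (hM2'.symm.trans hh.symm)
    rcases cov z hVz with hz|hz|hz|hz|hz
    · rcases cov w hVw with hw|hw|hw|hw|hw
      · exact hzw (hz.trans hw.symm)
      · have hphi2 : phi B D = phi c' A := by rw [hz, hw] at hphi; exact hphi
        exact blockPath (hphi2.trans h5A)
      · exact absurd hw hw1
      · exact absurd hw hw2
      · have hphi2 : phi B D = phi c' E := by rw [hz, hw] at hphi; exact hphi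
        exact blockCE hphi2
    · rcases cov w hVw with hw|hw|hw|hw|hw
      · have hphi2 : phi B D = phi c' A := by rw [hz, hw] at hphi; exact hphi.trans (phi_comm A c' (Ne.symm ncA))
        exact blockPath (hphi2.trans h5A)
      · exact hzw (hz.trans hw.symm)
      · exact absurd hw hw1
      · exact absurd hw hw2
      · have hphi2 : phi B D = phi A E := by rw [hz, hw] at hphi; exact hphi
        exact L5' A B D E hVA hVB hVD hVE nAB nAD nAE nBD nBE nDE ncA ncB ncD ncE nDa nDb nEa nEb h5A h5B hcl5 cov hM1' hM2' hphi2
    · exact absurd hz hz1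
    · exact absurd hz hz2
    · rcases cov w hVw with hw|hw|hw|hw|hw
      · have hphi2 : phi B D = phi c' E := by rw [hz, hw] at hphi; exact hphi.trans (phi_comm E c' (Ne.symm ncE))
        exact blockCE hphi2
      · have hphi2 : phi B D = phi A E := by rw [hz, hw] at hphi; exact hphi.trans (phi_comm E A (Ne.symm nAE))
        exact L5' A B D E hVA hVB hVD hVE nAB nAD nAE nBD nBE nDE ncA ncB ncD ncE nDa nDb nEa nEb h5A h5B hcl5 cov hM1' hM2' hphi2
      · exact absurd hw hw1
      · exact absurd hw hw2
      · exact hzw (hz.trans hw.symm)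
  have L2' : ∀ A B D E : Vtx m, V A → V B → V D → V E →
      A ≠ B → A ≠ D → A ≠ E → B ≠ D → B ≠ E → D ≠ E →
      c' ≠ A → c' ≠ B → c' ≠ D → c' ≠ E →
      D ≠ a' → D ≠ b' → E ≠ a' → E ≠ b' →
      phi c' A = phi x0 y0 → phi c' B = phi x0 y0 →
      (∀ u v, V u → V v → u ≠ v → phi u v = phi x0 y0 → sE u v c' A ∨ sE u v c' B) →
      (∀ t, V t → t = c' ∨ t = A ∨ t = B ∨ t = D ∨ t = E) →
      phi A B = phi c' D → False := by
    intro A B D E hVA hVB hVD hVE nAB nAD nAE nBD nBE nDE ncA ncB ncD ncE nDa nDb nEa nEb h5A h5B hcl5 cov hM1'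
    have covsw : ∀ t, V t → t = c' ∨ t = B ∨ t = A ∨ t = D ∨ t = E := by
      intro t ht
      rcases cov t ht with h|h|h|h|h
      exacts [Or.inl h, Or.inr (Or.inr (Or.inl h)), Or.inr (Or.inl h),
        Or.inr (Or.inr (Or.inr (Or.inl h))), Or.inr (Or.inr (Or.inr (Or.inr h)))]
    have hcl5sw : ∀ u v, V u → V v → u ≠ v → phi u v = phi x0 y0 → sE u v c' B ∨ sE u v c' A :=
      fun u v hu hv huv hcl => Or.symm (hcl5 u v hu hv huv hcl)
    obtain ⟨z, w, hVz, hVw, hzw, hz1, hz2, hw1, hw2, hphi⟩ := step c' E hVc' hVE ncE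
      (nsE_mk (Or.inr nEa) (Or.inr (Ne.symm ncE))) (nsE_mk (Or.inr nEb) (Or.inr (Ne.symm ncE)))
    have blockAB : phi c' E = phi A B → False := fun hh =>
      huniq A B c' D c' E hVA hVB hVc' hVD hVc' hVE nAB ncD ncE
        (nsE_mk (Or.inl (Ne.symm ncA)) (Or.inl nAD))
        (nsE_mk (Or.inl (Ne.symm ncA)) (Or.inl nAE))
        (nsE_mk (Or.inr nDE) (Or.inl ncE))
        hM1' hh.symm
    rcases cov z hVz with hz|hz|hz|hz|hz
    · exact absurd hz hz1
    · rcases cov w hVw with hw|hw|hw|hw|hw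
      · exact absurd hw hw1
      · exact hzw (hz.trans hw.symm)
      · have hphi2 : phi c' E = phi A B := by rw [hz, hw] at hphi; exact hphi
        exact blockAB hphi2
      · have hphi2 : phi c' E = phi A D := by rw [hz, hw] at hphi; exact hphi
        exact L4' A B D E hVA hVB hVD hVE nAB nAD nAE nBD nBE nDE ncA ncB ncD ncE nDa nDb nEa nEb h5A h5B hcl5 cov hM1' hphi2
      · exact absurd hw hw2
    · rcases cov w hVw with hw|hw|hw|hw|hw
      · exact absurd hw hw1
      · have hphi2 : phi c' E = phi A B := by rw [hz, hw] at hphi; exact hphi.trans (phi_comm B A (Ne.symm nAB))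
        exact blockAB hphi2
      · exact hzw (hz.trans hw.symm)
      · have hphi2 : phi c' E = phi B D := by rw [hz, hw] at hphi; exact hphi
        exact L4' B A D E hVB hVA hVD hVE (Ne.symm nAB) nBD nBE nAD nAE nDE ncB ncA ncD ncE nDa nDb nEa nEb h5B h5A hcl5sw covsw ((phi_comm B A (Ne.symm nAB)).trans hM1') hphi2
      · exact absurd hw hw2
    · rcases cov w hVw with hw|hw|hw|hw|hw
      · exact absurd hw hw1
      · have hphi2 : phi c' E = phi A D := by rw [hz, hw] at hphi; exact hphi.trans (phi_comm D A (Ne.symm nAD))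
        exact L4' A B D E hVA hVB hVD hVE nAB nAD nAE nBD nBE nDE ncA ncB ncD ncE nDa nDb nEa nEb h5A h5B hcl5 cov hM1' hphi2
      · have hphi2 : phi c' E = phi B D := by rw [hz, hw] at hphi; exact hphi.trans (phi_comm D B (Ne.symm nBD))
        exact L4' B A D E hVB hVA hVD hVE (Ne.symm nAB) nBD nBE nAD nAE nDE ncB ncA ncD ncE nDa nDb nEa nEb h5B h5A hcl5sw covsw ((phi_comm B A (Ne.symm nAB)).trans hM1') hphi2
      · exact hzw (hz.trans hw.symm)
      · exact absurd hw hw2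
    · exact absurd hz hz2
  -- final assembly
  have cov0 : ∀ t, V t → t = c' ∨ t = a' ∨ t = b' ∨ t = d' ∨ t = e' := hcov
  have covDE : ∀ t, V t → t = c' ∨ t = a' ∨ t = b' ∨ t = e' ∨ t = d' := by
    intro t ht
    rcases hcov t ht with h|h|h|h|h
    exacts [Or.inl h, Or.inr (Or.inl h), Or.inr (Or.inr (Or.inl h)),
      Or.inr (Or.inr (Or.inr (Or.inr h))), Or.inr (Or.inr (Or.inr (Or.inl h)))]
  obtain ⟨z, w, hVz, hVw, hzw, hz1, hz2, hw1, hw2, hphi⟩ := step a' b' hVa' hVb' ha'b'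
    (nsE_mk (Or.inl (Ne.symm hc'a')) (Or.inr (Ne.symm hc'b')))
    (nsE_mk (Or.inl (Ne.symm hc'a')) (Or.inr (Ne.symm hc'b')))
  have GDE := fun (h1 : phi a' b' = phi d' e') => L2 a' b' d' e' hVa' hVb' hVd' hVe'
    ha'b' (Ne.symm hd'a) (Ne.symm he'a) (Ne.symm hd'b) (Ne.symm he'b) hd'e'
    hc'a' hc'b' (Ne.symm hd'c) (Ne.symm he'c) hd'a hd'b he'a he'b
    hca5 hcb5 hpathu cov0 h1
  have GED := fun (h1 : phi a' b' = phi e' d') => L2 a' b' e' d' hVa' hVb' hVe' hVd'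
    ha'b' (Ne.symm he'a) (Ne.symm hd'a) (Ne.symm he'b) (Ne.symm hd'b) (Ne.symm hd'e')
    hc'a' hc'b' (Ne.symm he'c) (Ne.symm hd'c) he'a he'b hd'a hd'b
    hca5 hcb5 hpathu covDE h1
  have DDE := fun (h1 : phi a' b' = phi c' d') => L2' a' b' d' e' hVa' hVb' hVd' hVe'
    ha'b' (Ne.symm hd'a) (Ne.symm he'a) (Ne.symm hd'b) (Ne.symm he'b) hd'e'
    hc'a' hc'b' (Ne.symm hd'c) (Ne.symm he'c) hd'a hd'b he'a he'b
    hca5 hcb5 hpathu cov0 h1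
  have DED := fun (h1 : phi a' b' = phi c' e') => L2' a' b' e' d' hVa' hVb' hVe' hVd'
    ha'b' (Ne.symm he'a) (Ne.symm hd'a) (Ne.symm he'b) (Ne.symm hd'b) (Ne.symm hd'e')
    hc'a' hc'b' (Ne.symm he'c) (Ne.symm hd'c) he'a he'b hd'a hd'b
    hca5 hcb5 hpathu covDE h1
  rcases hcov z hVz with hz|hz|hz|hz|hz
  · rcases hcov w hVw with hw|hw|hw|hw|hw
    · exact hzw (hz.trans hw.symm)
    · exact absurd hw hw1
    · exact absurd hw hw2
    · exact DDE (by rw [hz, hw] at hphi; exact hphi)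
    · exact DED (by rw [hz, hw] at hphi; exact hphi)
  · exact absurd hz hz1
  · exact absurd hz hz2
  · rcases hcov w hVw with hw|hw|hw|hw|hw
    · exact DDE (by rw [hz, hw] at hphi; exact hphi.trans (phi_comm d' c' hd'c))
    · exact absurd hw hw1
    · exact absurd hw hw2
    · exact hzw (hz.trans hw.symm)
    · exact GDE (by rw [hz, hw] at hphi; exact hphi)
  · rcases hcov w hVw with hw|hw|hw|hw|hw
    · exact DED (by rw [hz, hw] at hphi; exact hphi.trans (phi_comm e' c' he'c))
    · exact absurd hw hw1
    · exact absurd hw hw2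
    · exact GED (by rw [hz, hw] at hphi; exact hphi)
    · exact hzw (hz.trans hw.symm)

end Main

/-- There is no 2-2-2-2-2 configuration under `φ` in which exactly four color classes
are matchings and the remaining one is a path. -/
theorem no_four_matchings_one_path (m : ℕ) (hm : 0 < m) :
    ¬ ∃ a b c d e : Vtx m, IsConfig22222 a b c d e ∧
      ∃ col₁ col₂ col₃ col₄ : Color m,
        col₁ ≠ col₂ ∧ col₁ ≠ col₃ ∧ col₁ ≠ col₄ ∧
        col₂ ≠ col₃ ∧ col₂ ≠ col₄ ∧ col₃ ≠ col₄ ∧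
        IsAttained a b c d e col₁ ∧ IsMatchingClass a b c d e col₁ ∧
        IsAttained a b c d e col₂ ∧ IsMatchingClass a b c d e col₂ ∧
        IsAttained a b c d e col₃ ∧ IsMatchingClass a b c d e col₃ ∧
        IsAttained a b c d e col₄ ∧ IsMatchingClass a b c d e col₄ ∧
        ∀ col' : Color m, IsAttained a b c d e col' →
          col' ≠ col₁ → col' ≠ col₂ → col' ≠ col₃ → col' ≠ col₄ →
          IsPathClass a b c d e col' := by
  exact no_four_matchings_one_path' m

end CFLS
end

section
/- Let n ≥ 2 and let the edges of the complete bipartite graph K_{n,n} with parts X and Y of size n be colored with at most ⌊n/2⌋ colors. Then there exist distinct vertices x, z ∈ X and distinct vertices u, v ∈ Y such that the edges xu and xv receive the same color and the edges zu and zv receive the same color; in particular, K_{n,n} contains a 4-cycle in which every color appears an even number of times, so g(K_{n,n}, C_4) > n/2. -/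
open Finset

lemma row_count {n k : ℕ} (g : Fin n → Fin k) :
    n ^ 2 ≤ k * #((univ ×ˢ univ : Finset (Fin n × Fin n)).filter fun p => g p.1 = g p.2) := by
  classical
  have hcard : #((univ ×ˢ univ : Finset (Fin n × Fin n)).filter fun p => g p.1 = g p.2)
      = ∑ j : Fin k, (#(univ.filter fun u => g u = j)) ^ 2 := by
    rw [Finset.card_eq_sum_card_fiberwise (f := fun p => g p.1) (t := univ) (fun _ _ => mem_univ _)]
    refine Finset.sum_congr rfl fun j _ => ?_
    rw [sq, ← Finset.card_product]
    congr 1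
    ext p
    simp only [Finset.mem_filter, Finset.mem_product, Finset.mem_univ, true_and]
    constructor <;> rintro ⟨h1, h2⟩ <;> simp_all
  have hsum : ∑ j : Fin k, #(univ.filter fun u => g u = j) = n := by
    rw [← Finset.card_eq_sum_card_fiberwise (f := g) (t := univ) (fun _ _ => mem_univ _)]
    simp
  have key := sq_sum_le_card_mul_sum_sq (s := (univ : Finset (Fin k)))
    (f := fun j => (#(univ.filter fun u => g u = j) : ℤ))
  rw [hcard]
  have h2 : ((n : ℤ)) ^ 2 ≤ (k : ℤ) * ∑ j : Fin k, (#(univ.filter fun u => g u = j) : ℤ) ^ 2 := by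
    calc ((n:ℤ))^2 = (∑ j : Fin k, (#(univ.filter fun u => g u = j) : ℤ)) ^ 2 := by
          rw [← Nat.cast_sum, hsum]
      _ ≤ _ := by simpa using key
  exact_mod_cast h2

lemma row_pairs {n k : ℕ} (hn : 2 ≤ n) (hk2 : 2 * k ≤ n) (g : Fin n → Fin k) :
    n ≤ #((univ ×ˢ univ : Finset (Fin n × Fin n)).filter fun p => p.1 ≠ p.2 ∧ g p.1 = g p.2) := by
  classical
  have hk0 : 0 < k := (g ⟨0, by omega⟩).pos
  set M := (univ ×ˢ univ : Finset (Fin n × Fin n)).filter fun p => g p.1 = g p.2 with hM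
  have h1 : n ^ 2 ≤ k * #M := row_count g
  have hM2 : 2 * n ≤ #M := by
    have : k * (2 * n) ≤ k * #M := by
      calc k * (2 * n) = (2 * k) * n := by ring
        _ ≤ n * n := Nat.mul_le_mul_right n hk2
        _ = n ^ 2 := (sq n).symm
        _ ≤ k * #M := h1
    exact Nat.le_of_mul_le_mul_left this hk0
  have hdiag : #(M.filter fun p => p.1 = p.2) ≤ n := by
    calc #(M.filter fun p => p.1 = p.2)
        ≤ #((univ ×ˢ univ : Finset (Fin n × Fin n)).filter fun p => p.1 = p.2) := by
          apply Finset.card_le_card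
          intro p hp
          simp only [Finset.mem_filter, hM] at hp ⊢
          exact ⟨hp.1.1, hp.2⟩
      _ ≤ n := by
          have := Finset.card_le_card_of_injOn (s := (univ ×ˢ univ : Finset (Fin n × Fin n)).filter
              fun p => p.1 = p.2) (t := (univ : Finset (Fin n))) Prod.fst (fun _ _ => mem_univ _)
            (by
              intro p hp q hq h
              simp only [Finset.coe_filter, Set.mem_setOf_eq] at hp hq
              exact Prod.ext h (by rw [← hp.2, ← hq.2, h]))
          simpa using this
  have hsplit : #(M.filter fun p => p.1 = p.2) + #(M.filter fun p => ¬ p.1 = p.2) = #M :=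
    Finset.card_filter_add_card_filter_not _
  have heq : (M.filter fun p => ¬ p.1 = p.2)
      = (univ ×ˢ univ : Finset (Fin n × Fin n)).filter fun p => p.1 ≠ p.2 ∧ g p.1 = g p.2 := by
    rw [hM, Finset.filter_filter]
    apply Finset.filter_congr
    intro p _; tauto
  rw [← heq]
  omega

/-- If the edges of `K_{n,n}` (with parts indexed by `Fin n`, edge `xu` for `x` in `X`
and `u` in `Y` colored `c x u`) are colored with at most `⌊n/2⌋` colors, then there are
distinct `x, z` in `X` and distinct `u, v` in `Y` with `c x u = c x v` and
`c z u = c z v`; in particular the 4-cycle `x u z v` sees every color an even number of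
times, so `g(K_{n,n}, C_4) > n/2`. -/
theorem g_Knn_C4_gt_half (n k : ℕ) (hn : 2 ≤ n) (hk : k ≤ n / 2)
    (c : Fin n → Fin n → Fin k) :
    ∃ x z u v : Fin n, x ≠ z ∧ u ≠ v ∧ c x u = c x v ∧ c z u = c z v := by
  classical
  have hk2 : 2 * k ≤ n := by omega
  set S := (univ : Finset (Fin n × Fin n × Fin n)).filter
    (fun q => q.2.1 ≠ q.2.2 ∧ c q.1 q.2.1 = c q.1 q.2.2) with hS
  have hScard : n * n ≤ #S := by
    rw [hS, Finset.card_eq_sum_card_fiberwise (f := fun q => q.1) (t := univ)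
      (fun _ _ => mem_univ _)]
    calc n * n = ∑ _x : Fin n, n := by simp [mul_comm]
      _ ≤ _ := by
        apply Finset.sum_le_sum
        intro x _
        refine (row_pairs hn hk2 (c x)).trans (le_of_eq ?_)
        apply Finset.card_bij (fun p _ => (x, p))
        · intro p hp
          simp only [Finset.mem_filter, Finset.mem_product, Finset.mem_univ, true_and] at hp ⊢
          exact ⟨⟨hp.1, hp.2⟩, trivial⟩
        · intro p _ q _ h
          simpa using congrArg Prod.snd h
        · intro q hq
          simp only [Finset.mem_filter, Finset.mem_univ, true_and] at hq
          refine ⟨q.2, ?_, ?_⟩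
          · have h1 := hq.1.1
            have h2 := hq.1.2
            rw [hq.2] at h2
            simp [Finset.mem_filter, h1, h2]
          · ext <;> simp [hq.2]
  have hP : #((univ ×ˢ univ : Finset (Fin n × Fin n)).filter fun p => p.1 ≠ p.2) < #S := by
    have hsub : ((univ ×ˢ univ : Finset (Fin n × Fin n)).filter fun p => p.1 ≠ p.2)
        ⊆ univ ×ˢ univ := Finset.filter_subset _ _
    have h1 : #((univ ×ˢ univ : Finset (Fin n × Fin n)).filter fun p => p.1 ≠ p.2)
        + #((univ ×ˢ univ : Finset (Fin n × Fin n)).filter fun p => ¬ p.1 ≠ p.2)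
        = n * n := by
      rw [Finset.card_filter_add_card_filter_not]
      simp [Finset.card_product]
    have h2 : 0 < #((univ ×ˢ univ : Finset (Fin n × Fin n)).filter fun p => ¬ p.1 ≠ p.2) := by
      apply Finset.card_pos.mpr
      exact ⟨(⟨0, by omega⟩, ⟨0, by omega⟩), by simp⟩
    omega
  obtain ⟨q1, hq1, q2, hq2, hne, heq⟩ := Finset.exists_ne_map_eq_of_card_lt_of_maps_to hP
    (f := fun q => q.2)
    (by
      intro q hq
      rw [hS, Finset.mem_coe, Finset.mem_filter] at hq
      simp [hq.2.1])
  rw [hS, Finset.mem_filter] at hq1 hq2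
  refine ⟨q1.1, q2.1, q1.2.1, q1.2.2, ?_, hq1.2.1, hq1.2.2, ?_⟩
  · intro h
    exact hne (Prod.ext h heq)
  · rw [heq]; exact hq2.2.2
end
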